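/- arXiv:1102.1156 — 3 statements merged into one kernel-verified Lean document; each statement's English description precedes it below -/
import Mathlib

section
/- Let u ∈ ℂ with u not a nonpositive integer translated by (2vi/π)ℤ, and v ∈ ℝ with v ≠ 0. Then the Laurent series Ψ(u,v,z) = ∑_{n∈ℤ} Γ(u + 2ivn/π) z^n converges absolutely for every z in the annulus C_v = {z ∈ ℂ : e^{-|v|} < |z| < e^{|v|}}. -/
open Complex Real

section Helpers
open Filter Finset Topology

private lemma sinh_prod_tendsto' (b : ℝ) :
    Tendsto (fun n : ℕ => π * b * ∏ j ∈ Finset.range n, (1 + b ^ 2 / ((j : ℝ) + 1) ^ 2))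
      atTop (𝓝 (Real.sinh (π * b))) := by
  have h := Complex.tendsto_euler_sin_prod (b * Complex.I)
  have hcast : ∀ n : ℕ, (π : ℂ) * (b * Complex.I) *
      ∏ j ∈ Finset.range n, ((1 : ℂ) - (b * Complex.I) ^ 2 / ((j : ℂ) + 1) ^ 2)
      = ((π * b * ∏ j ∈ Finset.range n, (1 + b ^ 2 / ((j : ℝ) + 1) ^ 2) : ℝ) : ℂ) * Complex.I := by
    intro n
    have : ∀ j ∈ Finset.range n, ((1 : ℂ) - (b * Complex.I) ^ 2 / ((j : ℂ) + 1) ^ 2)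
        = (((1 + b ^ 2 / ((j : ℝ) + 1) ^ 2 : ℝ)) : ℂ) := by
      intro j _
      push_cast
      rw [mul_pow, Complex.I_sq]
      ring
    rw [Finset.prod_congr rfl this, ← Complex.ofReal_prod]
    push_cast
    ring
  have h2 : Tendsto (fun n : ℕ =>
      (((π * b * ∏ j ∈ Finset.range n, (1 + b ^ 2 / ((j : ℝ) + 1) ^ 2) : ℝ) : ℂ) * Complex.I).im)
      atTop (𝓝 ((Complex.sin (π * (b * Complex.I))).im)) :=
    (Complex.continuous_im.tendsto _).comp ((tendsto_congr hcast).mp h)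
  simp only [Complex.mul_I_im, Complex.ofReal_re] at h2
  have : Complex.sin (↑π * (↑b * Complex.I)) = Complex.sin ((↑(π * b) : ℂ) * Complex.I) := by
    push_cast; ring_nf
  rw [this, Complex.sin_mul_I] at h2
  simpa [← Complex.ofReal_mul, ← Complex.ofReal_sinh] using h2

private lemma sqrt_finset_prod' (f : ℕ → ℝ) (h : ∀ i, 0 ≤ f i) (s : Finset ℕ) :
    Real.sqrt (∏ i ∈ s, f i) = ∏ i ∈ s, Real.sqrt (f i) := by
  classical
  induction s using Finset.induction_on with
  | empty => simp
  | insert a s hx ih =>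
    rw [Finset.prod_insert hx, Finset.prod_insert hx, Real.sqrt_mul (h _), ih]

private lemma gamma_vert_bound' {x : ℝ} (hx0 : 0 < x) (hx1 : x ≤ 1) {y : ℝ} (hy : y ≠ 0) :
    ‖Complex.Gamma (x + y * Complex.I)‖ ≤
      Real.Gamma x / Real.sqrt (Real.sinh (π * |y|) / (π * |y|)) := by
  set s : ℂ := x + y * Complex.I with hs
  have hsre : s.re = x := by simp [hs]
  have hpy : 0 < π * |y| := by positivity
  set P : ℕ → ℝ := fun n => ∏ j ∈ Finset.range n, (1 + y ^ 2 / ((j : ℝ) + 1) ^ 2) with hP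
  have hPpos : ∀ n, 0 < P n := fun n => Finset.prod_pos (fun j _ => by positivity)
  have hPlim : Tendsto P atTop (𝓝 (Real.sinh (π * |y|) / (π * |y|))) := by
    have h := sinh_prod_tendsto' |y|
    have h2 := h.div_const (π * |y|)
    refine (tendsto_congr fun n => ?_).mp h2
    rw [show (fun j : ℕ => 1 + |y| ^ 2 / ((j : ℝ) + 1) ^ 2)
        = (fun j : ℕ => 1 + y ^ 2 / ((j : ℝ) + 1) ^ 2) from funext fun j => by rw [_root_.sq_abs]]
    exact mul_div_cancel_left₀ _ hpy.ne'
  have hLpos : 0 < Real.sinh (π * |y|) / (π * |y|) := div_pos (by positivity) hpy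
  have key : ∀ᶠ n : ℕ in atTop, ‖Complex.GammaSeq s n‖
      ≤ Real.GammaSeq x n / Real.sqrt (P (n + 1)) := by
    filter_upwards [eventually_ge_atTop 1] with n hn
    have h1 : ‖(n : ℂ) ^ s‖ = (n : ℝ) ^ x := by
      rw [show ((n : ℂ)) = ((n : ℝ) : ℂ) by push_cast; rfl,
        Complex.norm_cpow_eq_rpow_re_of_pos (by exact_mod_cast hn) s, hsre]
    have habs : ‖Complex.GammaSeq s n‖
        = (n : ℝ) ^ x * (Nat.factorial n : ℝ) / ∏ j ∈ Finset.range (n + 1), ‖s + j‖ := by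
      rw [Complex.GammaSeq, norm_div, norm_mul, norm_prod, h1, Complex.norm_natCast]
    rw [habs]
    have hfac : ∀ j ∈ Finset.range (n + 1),
        (x + (j : ℝ)) * Real.sqrt (1 + y ^ 2 / ((j : ℝ) + 1) ^ 2) ≤ ‖s + j‖ := by
      intro j _
      have hsj : s + (j : ℂ) = ((x + j : ℝ) : ℂ) + (y : ℝ) * Complex.I := by
        rw [hs]; push_cast; ring
      rw [hsj, Complex.norm_add_mul_I]
      have hxj : 0 < x + (j : ℝ) := by positivity
      have heq : (x + (j : ℝ)) * Real.sqrt (1 + y ^ 2 / ((j : ℝ) + 1) ^ 2)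
          = Real.sqrt ((x + (j : ℝ)) ^ 2 * (1 + y ^ 2 / ((j : ℝ) + 1) ^ 2)) := by
        rw [Real.sqrt_mul (by positivity), Real.sqrt_sq hxj.le]
      rw [heq]
      apply Real.sqrt_le_sqrt
      have h1 : (x + (j : ℝ)) ^ 2 ≤ ((j : ℝ) + 1) ^ 2 := by nlinarith [Nat.cast_nonneg (α := ℝ) j]
      have h2 : (x + (j : ℝ)) ^ 2 * (y ^ 2 / ((j : ℝ) + 1) ^ 2) ≤ y ^ 2 := by
        rw [mul_div_assoc']
        rw [div_le_iff₀ (by positivity)]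
        nlinarith [sq_nonneg y]
      nlinarith
    have hprod : (∏ j ∈ Finset.range (n + 1), (x + (j : ℝ))) * Real.sqrt (P (n + 1))
        ≤ ∏ j ∈ Finset.range (n + 1), ‖s + j‖ := by
      rw [hP, sqrt_finset_prod' _ (fun i => by positivity), ← Finset.prod_mul_distrib]
      exact Finset.prod_le_prod (fun j _ => by positivity) hfac
    rw [Real.GammaSeq, div_div]
    have hposd : 0 < (∏ j ∈ Finset.range (n + 1), (x + (j : ℝ))) * Real.sqrt (P (n + 1)) :=
      mul_pos (Finset.prod_pos fun j _ => by positivity) (Real.sqrt_pos.mpr (hPpos _))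
    gcongr
  have hA : Tendsto (fun n => ‖Complex.GammaSeq s n‖) atTop
      (𝓝 (‖Complex.Gamma s‖)) :=
    (continuous_norm.tendsto _).comp (Complex.GammaSeq_tendsto_Gamma s)
  have hB : Tendsto (fun n => Real.GammaSeq x n / Real.sqrt (P (n + 1))) atTop
      (𝓝 (Real.Gamma x / Real.sqrt (Real.sinh (π * |y|) / (π * |y|)))) := by
    apply Tendsto.div (Real.GammaSeq_tendsto_Gamma x)
    · exact (Real.continuous_sqrt.tendsto _).comp (hPlim.comp (tendsto_add_atTop_nat 1))
    · exact (Real.sqrt_pos.mpr hLpos).ne'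
  exact le_of_tendsto_of_tendsto hA hB key

private lemma Gamma_shift' (w : ℂ) (M : ℕ) (h : ∀ j : ℕ, j < M → w + j ≠ 0) :
    Complex.Gamma (w + M) = Complex.Gamma w * ∏ j ∈ Finset.range M, (w + j) := by
  induction M with
  | zero => simp
  | succ M ih =>
    have hM : w + ((M : ℕ) + 1 : ℕ) = (w + M) + 1 := by push_cast; ring
    rw [hM, Complex.Gamma_add_one _ (h M (by omega)), ih (fun j hj => h j (by omega)),
      Finset.prod_range_succ]
    ring

private lemma sqrt_sinh_lower' {a : ℝ} (ha : 1 ≤ a) :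
    Real.exp (a / 2) / (2 * a) ≤ Real.sqrt (Real.sinh a / a) := by
  have ha0 : 0 < a := lt_of_lt_of_le one_pos ha
  have h2 : (2 : ℝ) ≤ Real.exp a := by
    have := Real.add_one_le_exp a
    linarith
  have hexpneg : Real.exp (-a) ≤ 1 := Real.exp_le_one_iff.mpr (by linarith)
  have hsinh : Real.exp a / 4 ≤ Real.sinh a := by
    rw [Real.sinh_eq]
    nlinarith
  have s1 : Real.sqrt (Real.exp a / (4 * a)) ≤ Real.sqrt (Real.sinh a / a) := by
    apply Real.sqrt_le_sqrt
    rw [div_le_div_iff₀ (by positivity) ha0]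
    nlinarith
  have hsqexp : Real.sqrt (Real.exp a) = Real.exp (a / 2) := by
    rw [show Real.exp a = (Real.exp (a / 2)) ^ 2 by rw [sq, ← Real.exp_add]; ring_nf,
      Real.sqrt_sq (Real.exp_pos _).le]
  have s2 : Real.sqrt (Real.exp a / (4 * a)) = Real.exp (a / 2) / (2 * Real.sqrt a) := by
    rw [Real.sqrt_div (Real.exp_pos a).le, hsqexp,
      show (4 : ℝ) * a = 2 ^ 2 * a by norm_num, Real.sqrt_mul (by positivity),
      Real.sqrt_sq (by norm_num : (0:ℝ) ≤ 2)]
  have s3 : Real.sqrt a ≤ a := by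
    calc Real.sqrt a ≤ Real.sqrt (a ^ 2) := Real.sqrt_le_sqrt (by nlinarith)
    _ = a := Real.sqrt_sq ha0.le
  calc Real.exp (a / 2) / (2 * a) ≤ Real.exp (a / 2) / (2 * Real.sqrt a) := by gcongr
  _ = Real.sqrt (Real.exp a / (4 * a)) := s2.symm
  _ ≤ _ := s1

private lemma gamma_decay' {x : ℝ} (hx0 : 0 < x) (hx1 : x ≤ 1) {y : ℝ} (hy : 1 ≤ |y|) :
    ‖Complex.Gamma (x + y * Complex.I)‖ ≤
      Real.Gamma x * (2 * (π * |y|)) * Real.exp (-(π * |y|) / 2) := by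
  have hy0 : y ≠ 0 := by
    intro h; rw [h, abs_zero] at hy; linarith
  have hpi : (1 : ℝ) ≤ π := by linarith [Real.pi_gt_three]
  have ha : 1 ≤ π * |y| := by nlinarith
  have h1 := gamma_vert_bound' hx0 hx1 hy0
  have h2 := sqrt_sinh_lower' ha
  have hΓ : 0 ≤ Real.Gamma x := (Real.Gamma_pos_of_pos hx0).le
  have ha0 : 0 < π * |y| := by linarith
  calc ‖Complex.Gamma (x + y * Complex.I)‖
      ≤ Real.Gamma x / Real.sqrt (Real.sinh (π * |y|) / (π * |y|)) := h1
  _ ≤ Real.Gamma x / (Real.exp ((π * |y|) / 2) / (2 * (π * |y|))) := by gcongr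
  _ = Real.Gamma x * (2 * (π * |y|)) * Real.exp (-(π * |y|) / 2) := by
      rw [neg_div, Real.exp_neg]
      field_simp
  _ ≤ _ := le_refl _

private lemma aux_summable' {ρ : ℝ} (h0 : 0 < ρ) (h1 : ρ < 1) (K : ℕ) (C : ℝ) :
    Summable (fun m : ℕ => C * (1 + (m : ℝ)) ^ K * ρ ^ m) := by
  have hb : Summable (fun n : ℕ => (n : ℝ) ^ K * ρ ^ n) :=
    summable_pow_mul_geometric_of_norm_lt_one K (by rwa [Real.norm_eq_abs, abs_of_pos h0])
  have hs : Summable (fun n : ℕ => ((n + 1 : ℕ) : ℝ) ^ K * ρ ^ (n + 1)) :=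
    (summable_nat_add_iff 1).mpr hb
  refine ((hs.mul_left (C * ρ⁻¹)).congr fun n => ?_)
  push_cast
  rw [pow_succ]
  field_simp
  ring
end Helpers

set_option maxHeartbeats 1000000 in
theorem stmt_1 (u : ℂ) (v : ℝ) (hv : v ≠ 0)
    (hu : ∀ m : ℕ, ∀ k : ℤ, u ≠ -(m : ℂ) + (2 * v * Complex.I / (π : ℂ)) * k)
    (z : ℂ) (hz1 : Real.exp (-|v|) < ‖z‖) (hz2 : ‖z‖ < Real.exp |v|) :
    Summable (fun n : ℤ => ‖Complex.Gamma (u + 2 * Complex.I * v * n / (π : ℂ)) * z ^ n‖) := by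
  have hπ : 0 < π := Real.pi_pos
  have hv0 : 0 < |v| := abs_pos.mpr hv
  set X : ℝ := u.re with hX
  set Y : ℝ := u.im with hY
  set k : ℤ := ⌈X⌉ - 1 with hk
  set x0 : ℝ := X - k with hx0def
  have hx00 : 0 < x0 := by
    have h1 := Int.ceil_lt_add_one X
    rw [hx0def, hk]
    push_cast
    linarith
  have hx01 : x0 ≤ 1 := by
    have h1 := Int.le_ceil X
    rw [hx0def, hk]
    push_cast
    linarith
  set K : ℕ := k.toNat with hK
  set r : ℝ := ‖z‖ with hr
  have hr0 : 0 < r := lt_trans (Real.exp_pos _) hz1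
  set B : ℝ := 2 * |v| / π with hB
  have hB0 : 0 < B := by positivity
  set y : ℤ → ℝ := fun n => Y + 2 * v * n / π with hy
  set w : ℤ → ℂ := fun n => ((x0 : ℝ) : ℂ) + ((y n : ℝ) : ℂ) * Complex.I with hw
  set N : ℕ := ⌈(1 + |Y|) / B⌉₊ with hN
  set S : Finset ℤ := Finset.Icc (-(N : ℤ)) (N : ℤ) with hS
  set D : ℝ := |Y| + B + K + 2 with hD
  set C : ℝ := Real.Gamma x0 * 2 * π * D ^ (K + 1) * Real.exp (π * |Y| / 2) with hC
  set g : ℤ → ℝ := fun n =>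
    C * (1 + |(n : ℝ)|) ^ (K + 1) * Real.exp (-|v| * |(n : ℝ)|) * r ^ n with hg
  -- representation
  have hrepr : ∀ n : ℤ, u + 2 * Complex.I * v * n / (π : ℂ) = w n + (k : ℂ) := by
    intro n
    have h2 : 2 * Complex.I * (v : ℂ) * ((n : ℤ) : ℂ) / ((π : ℝ) : ℂ)
        = (((2 * v * n / π : ℝ)) : ℂ) * Complex.I := by push_cast; ring
    rw [hw]
    simp only
    rw [h2]
    apply Complex.ext
    · simp [hx0def, hX]
    · simp [hy, hY]
  -- bounds on |y n| for n ∉ S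
  have habs2 : ∀ n : ℤ, |2 * v * (n : ℝ) / π| = B * |(n : ℝ)| := by
    intro n
    rw [hB, abs_div, abs_mul, abs_mul, _root_.abs_two, abs_of_pos hπ]
    ring
  have hyn_ub : ∀ n : ℤ, |y n| ≤ |Y| + B * |(n : ℝ)| := by
    intro n
    rw [hy]
    simp only
    calc |Y + 2 * v * n / π| ≤ |Y| + |2 * v * (n : ℝ) / π| := abs_add_le _ _
    _ = |Y| + B * |(n : ℝ)| := by rw [habs2]
  have hyn_lb : ∀ n : ℤ, B * |(n : ℝ)| - |Y| ≤ |y n| := by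
    intro n
    rw [hy]
    simp only
    have h := abs_add_le (Y + 2 * v * (n : ℝ) / π) (-Y)
    rw [show Y + 2 * v * (n : ℝ) / π + -Y = 2 * v * (n : ℝ) / π by ring, abs_neg] at h
    rw [← habs2 n]
    linarith
  have hnS_big : ∀ n : ℤ, n ∉ S → (N : ℝ) + 1 ≤ |(n : ℝ)| := by
    intro n hnS
    rw [hS, Finset.mem_Icc] at hnS
    have h' : (N : ℤ) + 1 ≤ n ∨ n ≤ -((N : ℤ) + 1) := by omega
    rcases h' with h' | h'
    · have : ((N : ℝ) + 1) ≤ (n : ℝ) := by exact_mod_cast h'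
      exact this.trans (le_abs_self _)
    · have : (n : ℝ) ≤ -((N : ℝ) + 1) := by exact_mod_cast h'
      have h2 : (N : ℝ) + 1 ≤ -(n : ℝ) := by linarith
      exact h2.trans (neg_le_abs _)
  have hyn1 : ∀ n : ℤ, n ∉ S → 1 ≤ |y n| := by
    intro n hnS
    have h1 := hnS_big n hnS
    have h2 : (1 + |Y|) / B ≤ (N : ℝ) := Nat.le_ceil _
    have h3 : 1 + |Y| ≤ B * (N : ℝ) := by
      rw [div_le_iff₀ hB0] at h2
      linarith
    have h4 : B * ((N : ℝ) + 1) ≤ B * |(n : ℝ)| := by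
      apply mul_le_mul_of_nonneg_left h1 hB0.le
    have := hyn_lb n
    nlinarith
  -- the Gamma estimate off S
  have key : ∀ n : ℤ, n ∉ S →
      ‖Complex.Gamma (u + 2 * Complex.I * v * n / (π : ℂ)) * z ^ n‖ ≤ g n := by
    intro n hnS
    have hy1 := hyn1 n hnS
    have hy0 : y n ≠ 0 := by
      intro h; rw [h, abs_zero] at hy1; linarith
    have hGw : ‖Complex.Gamma (w n)‖ ≤
        Real.Gamma x0 * (2 * (π * |y n|)) * Real.exp (-(π * |y n|) / 2) :=
      gamma_decay' hx00 hx01 hy1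
    have hGs : ‖Complex.Gamma (w n + (k : ℂ))‖ ≤
        ‖Complex.Gamma (w n)‖ * (1 + (K : ℝ) + |y n|) ^ K := by
      rcases le_or_gt 0 k with hk0 | hk0
      · have hkK : (k : ℂ) = ((K : ℕ) : ℂ) := by
          rw [hK]
          exact_mod_cast congrArg (Int.cast : ℤ → ℂ) (Int.toNat_of_nonneg hk0).symm
        have hne : ∀ j : ℕ, j < K → w n + j ≠ 0 := by
          intro j hj h0
          have him := congrArg Complex.im h0
          simp [hw] at him
          exact hy0 him
        rw [hkK, Gamma_shift' (w n) K hne, norm_mul, norm_prod]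
        apply mul_le_mul_of_nonneg_left _ (norm_nonneg _)
        calc ∏ j ∈ Finset.range K, ‖w n + j‖
            ≤ ∏ _j ∈ Finset.range K, (1 + (K : ℝ) + |y n|) := by
              apply Finset.prod_le_prod (fun j _ => norm_nonneg _)
              intro j hj
              rw [Finset.mem_range] at hj
              have hjK : (j : ℝ) ≤ (K : ℝ) - 1 := by
                have : (j : ℝ) + 1 ≤ (K : ℝ) := by exact_mod_cast hj
                linarith
              calc ‖w n + j‖ ≤ |(w n + (j : ℂ)).re| + |(w n + (j : ℂ)).im| :=
                    Complex.norm_le_abs_re_add_abs_im _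
              _ ≤ 1 + (K : ℝ) + |y n| := by
                  have hre : (w n + (j : ℂ)).re = x0 + j := by simp [hw]
                  have him : (w n + (j : ℂ)).im = y n := by simp [hw]
                  rw [hre, him, abs_of_pos (by positivity)]
                  linarith
        _ = (1 + (K : ℝ) + |y n|) ^ K := by
              rw [Finset.prod_const, Finset.card_range]
      · have hK0 : K = 0 := by rw [hK]; omega
        set M : ℕ := (-k).toNat with hM
        have hMk : ((M : ℕ) : ℂ) = -(k : ℂ) := by
          have h1 : ((M : ℕ) : ℤ) = -k := Int.toNat_of_nonneg (by omega)
          exact_mod_cast congrArg (Int.cast : ℤ → ℂ) h1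
        have hwn : w n = (w n + (k : ℂ)) + ((M : ℕ) : ℂ) := by rw [hMk]; ring
        have hne : ∀ j : ℕ, j < M → (w n + (k : ℂ)) + j ≠ 0 := by
          intro j hj h0
          have him := congrArg Complex.im h0
          simp [hw] at him
          exact hy0 him
        have hrec := Gamma_shift' (w n + (k : ℂ)) M hne
        rw [← hwn] at hrec
        have habseq := congrArg (‖·‖) hrec
        rw [norm_mul, norm_prod] at habseq
        have hprod1 : (1 : ℝ) ≤ ∏ j ∈ Finset.range M, ‖w n + (k : ℂ) + j‖ := by
          calc (1 : ℝ) = ∏ _j ∈ Finset.range M, (1 : ℝ) := by simp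
          _ ≤ ∏ j ∈ Finset.range M, ‖w n + (k : ℂ) + j‖ := by
            apply Finset.prod_le_prod (fun j _ => zero_le_one)
            intro j _
            calc (1 : ℝ) ≤ |y n| := hy1
          _ = |(w n + (k : ℂ) + (j : ℂ)).im| := by simp [hw]
          _ ≤ ‖w n + (k : ℂ) + j‖ := Complex.abs_im_le_norm _
        rw [hK0, pow_zero, mul_one]
        calc ‖Complex.Gamma (w n + (k : ℂ))‖
            ≤ ‖Complex.Gamma (w n + (k : ℂ))‖ *
              ∏ j ∈ Finset.range M, ‖w n + (k : ℂ) + j‖ :=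
              le_mul_of_one_le_right (norm_nonneg _) hprod1
        _ = ‖Complex.Gamma (w n)‖ := habseq.symm
    -- core estimate
    have hcore : ‖Complex.Gamma (u + 2 * Complex.I * v * n / (π : ℂ))‖
        ≤ C * (1 + |(n : ℝ)|) ^ (K + 1) * Real.exp (-|v| * |(n : ℝ)|) := by
      have ha : |y n| ≤ D * (1 + |(n : ℝ)|) := by
        have h1 := hyn_ub n
        have h2 : |Y| + B * |(n : ℝ)| ≤ D * (1 + |(n : ℝ)|) := by
          rw [hD]
          have hn0 : 0 ≤ |(n : ℝ)| := abs_nonneg _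
          have hK0 : (0 : ℝ) ≤ K := Nat.cast_nonneg _
          nlinarith [abs_nonneg Y, hB0.le]
        linarith
      have hb : 1 + (K : ℝ) + |y n| ≤ D * (1 + |(n : ℝ)|) := by
        have h1 := hyn_ub n
        rw [hD]
        have hn0 : 0 ≤ |(n : ℝ)| := abs_nonneg _
        nlinarith [abs_nonneg Y, hB0.le]
      have hc : Real.exp (-(π * |y n|) / 2) ≤ Real.exp (π * |Y| / 2) * Real.exp (-|v| * |(n : ℝ)|) := by
        rw [← Real.exp_add]
        apply Real.exp_le_exp.mpr
        have h1 := hyn_lb n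
        have hBn : B * |(n : ℝ)| = 2 * |v| * |(n : ℝ)| / π := by rw [hB]; ring
        rw [hBn] at h1
        have h3 : 2 * |v| * |(n : ℝ)| ≤ (|y n| + |Y|) * π :=
          (div_le_iff₀ hπ).mp (by linarith)
        nlinarith
      calc ‖Complex.Gamma (u + 2 * Complex.I * v * n / (π : ℂ))‖
          = ‖Complex.Gamma (w n + (k : ℂ))‖ := by rw [hrepr n]
      _ ≤ ‖Complex.Gamma (w n)‖ * (1 + (K : ℝ) + |y n|) ^ K := hGs
      _ ≤ (Real.Gamma x0 * (2 * (π * |y n|)) * Real.exp (-(π * |y n|) / 2)) *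
            (1 + (K : ℝ) + |y n|) ^ K := by
            apply mul_le_mul_of_nonneg_right hGw (by positivity)
      _ = Real.Gamma x0 * (2 * π) * |y n| * Real.exp (-(π * |y n|) / 2) *
            (1 + (K : ℝ) + |y n|) ^ K := by ring
      _ ≤ Real.Gamma x0 * (2 * π) * (D * (1 + |(n : ℝ)|)) *
            (Real.exp (π * |Y| / 2) * Real.exp (-|v| * |(n : ℝ)|)) *
            (D * (1 + |(n : ℝ)|)) ^ K := by
            have hΓ0 : 0 ≤ Real.Gamma x0 := (Real.Gamma_pos_of_pos hx00).le
            have hD0 : (0 : ℝ) < D := by rw [hD, hB]; positivity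
            have ht0 : (0 : ℝ) ≤ 1 + |(n : ℝ)| := by positivity
            have hpow : (1 + (K : ℝ) + |y n|) ^ K ≤ (D * (1 + |(n : ℝ)|)) ^ K :=
              pow_le_pow_left₀ (by positivity) hb K
            have h4 : Real.Gamma x0 * (2 * π) * |y n| * Real.exp (-(π * |y n|) / 2)
                ≤ Real.Gamma x0 * (2 * π) * (D * (1 + |(n : ℝ)|)) *
                  (Real.exp (π * |Y| / 2) * Real.exp (-|v| * |(n : ℝ)|)) :=
              mul_le_mul (mul_le_mul_of_nonneg_left ha (by positivity))
                hc (Real.exp_pos _).le (by positivity)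
            exact mul_le_mul h4 hpow (by positivity) (by positivity)
      _ = (Real.Gamma x0 * 2 * π * Real.exp (π * |Y| / 2)) *
            ((D * (1 + |(n : ℝ)|)) ^ (K + 1)) * Real.exp (-|v| * |(n : ℝ)|) := by
            rw [pow_succ]; ring
      _ = C * (1 + |(n : ℝ)|) ^ (K + 1) * Real.exp (-|v| * |(n : ℝ)|) := by
            rw [hC, mul_pow]; ring
    -- finish
    rw [norm_mul, norm_zpow, hg]
    simp only
    rw [← hr]
    apply mul_le_mul_of_nonneg_right hcore (zpow_nonneg hr0.le n)
  -- summability of g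
  have hρ1 : Real.exp (-|v|) * r < 1 := by
    have h := mul_lt_mul_of_pos_left hz2 (Real.exp_pos (-|v|))
    rwa [← Real.exp_add, neg_add_cancel, Real.exp_zero] at h
  have hρ2 : Real.exp (-|v|) * r⁻¹ < 1 := by
    rw [← div_eq_mul_inv, div_lt_one hr0]
    exact hz1
  have hgsum : Summable g := by
    apply Summable.of_nat_of_neg
    · refine (aux_summable' (mul_pos (Real.exp_pos _) hr0) hρ1 (K + 1) C).congr fun m => ?_
      rw [hg]
      simp only
      have e1 : |(((m : ℕ) : ℤ) : ℝ)| = (m : ℝ) := by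
        push_cast
        exact abs_of_nonneg (Nat.cast_nonneg m)
      rw [e1, zpow_natCast,
        show -|v| * (m : ℝ) = (m : ℝ) * -|v| by ring, Real.exp_nat_mul, mul_pow]
      ring
    · refine (aux_summable' (mul_pos (Real.exp_pos _) (inv_pos.mpr hr0)) hρ2 (K + 1) C).congr
        fun m => ?_
      rw [hg]
      simp only
      have e1 : |((-(m : ℕ) : ℤ) : ℝ)| = (m : ℝ) := by
        push_cast
        rw [abs_neg]
        exact abs_of_nonneg (Nat.cast_nonneg m)
      rw [e1, zpow_neg, zpow_natCast, ← inv_pow,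
        show -|v| * (m : ℝ) = (m : ℝ) * -|v| by ring, Real.exp_nat_mul, mul_pow]
      ring
  refine (Finset.summable_compl_iff S).mp ?_
  exact Summable.of_nonneg_of_le (fun p => norm_nonneg _)
    (fun p => key p p.2) (hgsum.subtype _)
end

section
/- Let u ∈ ℂ with Re u > 0 and q > 1. The holomorphic function S₊(u,q,ζ) = ∑_{k≥0} q^{ku} e^{-ζ q^k} on the half-plane Re ζ > 0 has the imaginary axis Re ζ = 0 as natural boundary: there is no point ζ₀ with Re ζ₀ = 0 at which S₊ extends holomorphically to a neighborhood. -/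
open Complex Real Filter Topology MeasureTheory intervalIntegral
open scoped ENNReal NNReal

lemma aux_summable {q : ℝ} (hq : 1 < q) (β : ℝ) {σ : ℝ} (hσ : 0 < σ) :
    Summable (fun k : ℕ => (q ^ k) ^ β * Real.exp (-(σ * q ^ k))) := by
  have hq0 : 0 < q := lt_trans one_pos hq
  have hqk : ∀ k : ℕ, (0:ℝ) < q ^ k := fun k => pow_pos hq0 k
  apply summable_of_ratio_norm_eventually_le (r := 1/2) (by norm_num)
  have hten : Tendsto (fun k : ℕ => q ^ β * Real.exp (-(σ * q ^ k * (q - 1)))) atTop (𝓝 0) := by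
    have h1 : Tendsto (fun k : ℕ => σ * q ^ k * (q - 1)) atTop atTop := by
      apply Tendsto.atTop_mul_const (by linarith)
      exact (tendsto_pow_atTop_atTop_of_one_lt hq).const_mul_atTop hσ
    have := (Real.tendsto_exp_neg_atTop_nhds_zero.comp h1).const_mul (q ^ β)
    simpa using this
  have hev : ∀ᶠ k : ℕ in atTop, q ^ β * Real.exp (-(σ * q ^ k * (q - 1))) ≤ 1/2 :=
    hten.eventually_le_const (by norm_num : (0:ℝ) < 1/2)
  filter_upwards [hev] with k hk
  have hpos : (0:ℝ) < (q ^ k) ^ β * Real.exp (-(σ * q ^ k)) :=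
    mul_pos (Real.rpow_pos_of_pos (hqk k) β) (Real.exp_pos _)
  have e1 : Real.exp (-(σ * (q ^ k * q))) = Real.exp (-(σ * q ^ k * (q - 1))) * Real.exp (-(σ * q ^ k)) := by
    rw [← Real.exp_add]; congr 1; ring
  have heq : (q ^ (k+1) : ℝ) ^ β * Real.exp (-(σ * q ^ (k+1)))
      = (q ^ β * Real.exp (-(σ * q ^ k * (q - 1)))) * ((q ^ k) ^ β * Real.exp (-(σ * q ^ k))) := by
    rw [pow_succ, Real.mul_rpow (le_of_lt (hqk k)) (le_of_lt hq0), e1]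
    ring
  rw [Real.norm_eq_abs, Real.norm_eq_abs, abs_of_pos hpos, abs_of_pos (by positivity), heq]
  exact mul_le_mul_of_nonneg_right hk (le_of_lt hpos)


lemma main_est (u : ℂ) (hu : 0 < u.re) (q : ℝ) (hq : 1 < q) (t₀ h M : ℝ) (hh : 0 < h)
    (K : ℕ)
    (hbound : ∀ t : ℝ, t ∈ Set.Icc (t₀ - h) (t₀ + h) →
      ‖∑' k : ℕ, (q:ℂ)^((k:ℂ)*u) * Complex.exp (-((((q:ℝ)^K)⁻¹ : ℝ) + (t:ℝ)*Complex.I : ℂ) * (q:ℂ)^k)‖ ≤ M) :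
    ((q:ℝ)^K)^u.re * Real.exp (-1) * (2*h) ≤ 2*h*M +
      (2*q/((q-1)*(q^u.re - 1)) + (2*q/(q-1)) * ∑' j:ℕ, ((q:ℝ)^(j+1))^u.re * Real.exp (-(1*q^(j+1))))
        * ((q:ℝ)^K)^u.re * ((q:ℝ)^K)⁻¹ := by
  have hq0 : 0 < q := lt_trans one_pos hq
  set α := u.re with hα
  set σ : ℝ := ((q:ℝ)^K)⁻¹ with hσdef
  have hσ : 0 < σ := by positivity
  set a : ℝ := t₀ - h with ha
  set b : ℝ := t₀ + h with hb
  have hab : a ≤ b := by simp only [ha, hb]; linarith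
  have hba : b - a = 2*h := by simp only [ha, hb]; ring
  set N : ℕ → ℝ := fun k => (q^k)^α * Real.exp (-(σ * q^k)) with hN
  have hNpos : ∀ k, 0 < N k := fun k => mul_pos (Real.rpow_pos_of_pos (pow_pos hq0 k) α) (Real.exp_pos _)
  have hNsum : Summable N := aux_summable hq α hσ
  set f : ℕ → ℝ → ℂ := fun k t => (q:ℂ)^((k:ℂ)*u) * Complex.exp (-(↑(σ * q^k) : ℂ)) *
      Complex.exp ((↑((q:ℝ)^K - (q:ℝ)^k) * Complex.I) * (t:ℂ)) with hf
  -- pointwise product identity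
  have hterm : ∀ (k : ℕ) (t : ℝ),
      (q:ℂ)^((k:ℂ)*u) * Complex.exp (-((σ : ℝ) + (t:ℝ)*Complex.I : ℂ) * (q:ℂ)^k)
        * Complex.exp ((↑((q:ℝ)^K) * Complex.I) * (t:ℂ)) = f k t := by
    intro k t
    simp only [hf]
    conv_lhs => rw [mul_assoc, ← Complex.exp_add]
    conv_rhs => rw [mul_assoc, ← Complex.exp_add]
    congr 2
    push_cast
    ring
  -- norm of f
  have hnorm : ∀ k t, ‖f k t‖ = N k := by
    intro k t
    rw [hf, norm_mul, norm_mul]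
    have h1 : ‖(q:ℂ)^((k:ℂ)*u)‖ = (q^k)^α := by
      rw [Complex.norm_cpow_eq_rpow_re_of_pos hq0]
      have : ((k:ℂ)*u).re = (k:ℝ) * u.re := by simp [Complex.mul_re]
      rw [this, Real.rpow_mul hq0.le, Real.rpow_natCast]
    have h2 : ‖Complex.exp (-(↑(σ * q^k) : ℂ))‖ = Real.exp (-(σ * q^k)) := by
      rw [Complex.norm_exp, Complex.neg_re, Complex.ofReal_re]
    have h3 : ‖Complex.exp ((↑((q:ℝ)^K - (q:ℝ)^k) * Complex.I) * (t:ℂ))‖ = 1 := by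
      have he : ((↑((q:ℝ)^K - (q:ℝ)^k) : ℂ) * Complex.I) * (t:ℂ)
          = ↑(((q:ℝ)^K - q^k)*t) * Complex.I := by push_cast; ring
      rw [he, Complex.norm_exp, Complex.mul_I_re, Complex.ofReal_im,
        neg_zero, Real.exp_zero]
    rw [h1, h2, h3, mul_one, hN]
  have hfsum : ∀ t : ℝ, Summable (fun k => f k t) := by
    intro t
    apply Summable.of_norm
    simpa only [hnorm] using hNsum
  -- the tsum identity
  have hfe : ∀ t : ℝ,
      (∑' k : ℕ, (q:ℂ)^((k:ℂ)*u) * Complex.exp (-((σ : ℝ) + (t:ℝ)*Complex.I : ℂ) * (q:ℂ)^k))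
        * Complex.exp ((↑((q:ℝ)^K) * Complex.I) * (t:ℂ)) = ∑' k : ℕ, f k t := by
    intro t
    rw [← tsum_congr fun k => hterm k t, tsum_mul_right]
  -- integral bound
  have hphase : ∀ t : ℝ, ‖Complex.exp ((↑((q:ℝ)^K) * Complex.I) * (t:ℂ))‖ = 1 := by
    intro t
    have he : ((↑((q:ℝ)^K) : ℂ) * Complex.I) * (t:ℂ) = ↑(((q:ℝ)^K)*t) * Complex.I := by
      push_cast; ring
    rw [he, Complex.norm_exp, Complex.mul_I_re, Complex.ofReal_im,
      neg_zero, Real.exp_zero]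
  have hptb : ∀ t ∈ Set.uIoc a b, ‖∑' k, f k t‖ ≤ M := by
    intro t ht
    rw [Set.uIoc_of_le hab] at ht
    have ht' : t ∈ Set.Icc a b := Set.Ioc_subset_Icc_self ht
    rw [← hfe t, norm_mul, hphase, mul_one]
    exact hbound t ht'
  have hI : ‖∫ t in a..b, (∑' k, f k t)‖ ≤ M * (2*h) := by
    rw [← hba]
    calc ‖∫ t in a..b, (∑' k, f k t)‖ ≤ M * |b - a| :=
          intervalIntegral.norm_integral_le_of_norm_le_const hptb
      _ = M * (b - a) := by rw [_root_.abs_of_nonneg (by linarith : (0:ℝ) ≤ b - a)]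
  -- measurability and interchange
  have hcont : ∀ k, Continuous (f k) := by
    intro k
    simp only [hf]
    fun_prop
  have hmeas : ∀ k, AEStronglyMeasurable (f k) (volume.restrict (Set.Ioc a b)) :=
    fun k => (hcont k).aestronglyMeasurable
  have hlintk : ∀ k, ∫⁻ t in Set.Ioc a b, (‖f k t‖₊ : ℝ≥0∞) ∂volume
      = ENNReal.ofReal (N k) * ENNReal.ofReal (b - a) := by
    intro k
    have : ∀ t, (‖f k t‖₊ : ℝ≥0∞) = ENNReal.ofReal (N k) := by
      intro t
      rw [← hnorm k t]; exact (ofReal_norm (f k t)).symm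
    calc ∫⁻ t in Set.Ioc a b, (‖f k t‖₊ : ℝ≥0∞) ∂volume
        = ∫⁻ _ in Set.Ioc a b, ENNReal.ofReal (N k) ∂volume := lintegral_congr (fun t => this t)
      _ = ENNReal.ofReal (N k) * volume (Set.Ioc a b) := by
          rw [MeasureTheory.setLIntegral_const]
      _ = ENNReal.ofReal (N k) * ENNReal.ofReal (b - a) := by rw [Real.volume_Ioc]
  have hlint : (∑' k, ∫⁻ t in Set.Ioc a b, (‖f k t‖₊ : ℝ≥0∞) ∂volume) ≠ ⊤ := by
    rw [tsum_congr hlintk, ENNReal.tsum_mul_right]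
    apply ENNReal.mul_ne_top _ ENNReal.ofReal_ne_top
    rw [← ENNReal.ofReal_tsum_of_nonneg (fun k => (hNpos k).le) hNsum]
    exact ENNReal.ofReal_ne_top
  have hinter : (∫ t in a..b, (∑' k, f k t)) = ∑' k, ∫ t in a..b, f k t := by
    rw [intervalIntegral.integral_of_le hab, MeasureTheory.integral_tsum hmeas hlint]
    exact tsum_congr fun k => (intervalIntegral.integral_of_le hab).symm
  -- value at K
  set C : ℕ → ℂ := fun k => (q:ℂ)^((k:ℂ)*u) * Complex.exp (-(↑(σ * q^k) : ℂ)) with hC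
  have hCnorm : ∀ k, ‖C k‖ = N k := by
    intro k
    rw [← hnorm k 0]
    simp only [hf, hC, Complex.ofReal_zero, mul_zero, Complex.exp_zero, mul_one]
  have hintK : (∫ t in a..b, f K t) = (b - a) • C K := by
    have hfK : f K = fun _ : ℝ => C K := by
      funext t
      simp only [hf, hC, sub_self, Complex.ofReal_zero, zero_mul, Complex.exp_zero, mul_one]
    rw [hfK, intervalIntegral.integral_const]
  -- minimal distance
  set m : ℝ := q^K*(q-1)/q with hm'
  have hm : (0:ℝ) < m := div_pos (mul_pos (pow_pos hq0 K) (by linarith)) hq0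
  have hdist : ∀ k, k ≠ K → m ≤ |(q:ℝ)^K - q^k| := by
    intro k hk
    rcases lt_or_gt_of_ne hk with hlt | hgt
    · have h1 : (q:ℝ)^k * q ≤ q^K := by
        calc (q:ℝ)^k * q = q^(k+1) := (pow_succ q k).symm
          _ ≤ q^K := pow_le_pow_right₀ hq.le hlt
      have h2 : (q:ℝ)^k < q^K := pow_lt_pow_right₀ hq hlt
      rw [_root_.abs_of_pos (by linarith : (0:ℝ) < q^K - q^k), hm', div_le_iff₀ hq0]
      nlinarith [pow_pos hq0 K, pow_pos hq0 k]
    · have h1 : (q:ℝ)^K * q ≤ q^k := by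
        calc (q:ℝ)^K * q = q^(K+1) := (pow_succ q K).symm
          _ ≤ q^k := pow_le_pow_right₀ hq.le hgt
      have h2 : (q:ℝ)^K < q^k := pow_lt_pow_right₀ hq hgt
      rw [abs_sub_comm, _root_.abs_of_pos (by linarith : (0:ℝ) < q^k - q^K), hm', div_le_iff₀ hq0]
      nlinarith [pow_pos hq0 K, sq_nonneg (q-1)]
  -- integral bound for k ≠ K
  have hintne : ∀ k, k ≠ K → ‖∫ t in a..b, f k t‖ ≤ N k * (2 / m) := by
    intro k hk
    have habs := hdist k hk
    have hωne : ((q:ℝ)^K - q^k) ≠ 0 := by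
      intro h0
      rw [h0, abs_zero] at habs
      linarith
    have hcne : ((↑((q:ℝ)^K - q^k) : ℂ) * Complex.I) ≠ 0 :=
      mul_ne_zero (Complex.ofReal_ne_zero.2 hωne) Complex.I_ne_zero
    have hval : (∫ t in a..b, f k t) = C k *
        ((Complex.exp ((↑((q:ℝ)^K - q^k) * Complex.I) * (b:ℂ))
          - Complex.exp ((↑((q:ℝ)^K - q^k) * Complex.I) * (a:ℂ)))
          / ((↑((q:ℝ)^K - q^k) : ℂ) * Complex.I)) := by
      have : (∫ t in a..b, f k t) = C k * ∫ t in a..b,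
          Complex.exp (((↑((q:ℝ)^K - q^k) : ℂ) * Complex.I) * (t:ℂ)) := by
        rw [← intervalIntegral.integral_const_mul]
      rw [this, integral_exp_mul_complex hcne]
    rw [hval, norm_mul, hCnorm]
    apply mul_le_mul_of_nonneg_left _ (hNpos k).le
    rw [norm_div]
    have hub : ‖Complex.exp ((↑((q:ℝ)^K - q^k) * Complex.I) * (b:ℂ))
        - Complex.exp ((↑((q:ℝ)^K - q^k) * Complex.I) * (a:ℂ))‖ ≤ 2 := by
      apply le_trans (norm_sub_le _ _)
      have e1 : ‖Complex.exp ((↑((q:ℝ)^K - q^k) * Complex.I) * (b:ℂ))‖ = 1 := by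
        have he : ((↑((q:ℝ)^K - q^k) : ℂ) * Complex.I) * (b:ℂ)
            = ↑(((q:ℝ)^K - q^k)*b) * Complex.I := by push_cast; ring
        rw [he, Complex.norm_exp, Complex.mul_I_re, Complex.ofReal_im,
          neg_zero, Real.exp_zero]
      have e2 : ‖Complex.exp ((↑((q:ℝ)^K - q^k) * Complex.I) * (a:ℂ))‖ = 1 := by
        have he : ((↑((q:ℝ)^K - q^k) : ℂ) * Complex.I) * (a:ℂ)
            = ↑(((q:ℝ)^K - q^k)*a) * Complex.I := by push_cast; ring
        rw [he, Complex.norm_exp, Complex.mul_I_re, Complex.ofReal_im,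
          neg_zero, Real.exp_zero]
      rw [e1, e2]; norm_num
    have hcnorm : ‖((↑((q:ℝ)^K - q^k) : ℂ) * Complex.I)‖ = |(q:ℝ)^K - q^k| := by
      rw [norm_mul, Complex.norm_real, Complex.norm_I, mul_one, Real.norm_eq_abs]
    rw [hcnorm]
    calc ‖Complex.exp ((↑((q:ℝ)^K - q^k) * Complex.I) * (b:ℂ))
        - Complex.exp ((↑((q:ℝ)^K - q^k) * Complex.I) * (a:ℂ))‖ / |(q:ℝ)^K - q^k|
        ≤ 2 / |(q:ℝ)^K - q^k| := by gcongr
      _ ≤ 2 / m := by gcongr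
  -- summability of the integrals
  have hIsum : Summable (fun k => ∫ t in a..b, f k t) := by
    apply Summable.of_norm_bounded (hNsum.mul_right (2*h))
    intro k
    have hb1 := intervalIntegral.norm_integral_le_of_norm_le_const (C := N k)
      (f := f k) (a := a) (b := b) (fun t _ => (hnorm k t).le)
    calc ‖∫ t in a..b, f k t‖ ≤ N k * |b - a| := hb1
      _ = N k * (2*h) := by rw [hba, _root_.abs_of_nonneg (by linarith : (0:ℝ) ≤ 2*h)]
  set bnd : ℕ → ℝ := fun k => if k = K then 0 else N k * (2 / m) with hbnddef
  have hbnd_le : ∀ k, bnd k ≤ N k * (2/m) := by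
    intro k
    by_cases hk : k = K
    · simp only [hbnddef, if_pos hk]
      positivity
    · simp only [hbnddef, if_neg hk]
      exact le_rfl
  have hbnd_nonneg : ∀ k, 0 ≤ bnd k := by
    intro k
    by_cases hk : k = K
    · simp [hbnddef, hk]
    · simp only [hbnddef, if_neg hk]
      positivity
  have hbnd_sum : Summable bnd :=
    Summable.of_nonneg_of_le hbnd_nonneg hbnd_le (hNsum.mul_right _)
  have hsplit := hIsum.tsum_eq_add_tsum_ite K
  have hnormite : ∀ k, ‖if k = K then (0:ℂ) else ∫ t in a..b, f k t‖ ≤ bnd k := by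
    intro k
    by_cases hk : k = K
    · simp [hbnddef, hk]
    · simp only [hbnddef, if_neg hk]
      exact hintne k hk
  have hT : ‖∑' k, (if k = K then (0:ℂ) else ∫ t in a..b, f k t)‖ ≤ ∑' k, bnd k := by
    have hsn : Summable (fun k => ‖if k = K then (0:ℂ) else ∫ t in a..b, f k t‖) :=
      Summable.of_nonneg_of_le (fun k => norm_nonneg _) hnormite hbnd_sum
    exact le_trans (norm_tsum_le_tsum_norm hsn) (Summable.tsum_le_tsum hnormite hsn hbnd_sum)
  have hσqK : σ * q^K = 1 := inv_mul_cancel₀ (ne_of_gt (pow_pos hq0 K))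
  have hNK : N K = (q^K)^α * Real.exp (-1) := by
    have : N K = (q^K)^α * Real.exp (-(σ * q^K)) := rfl
    rw [this, hσqK]
  have hfKnorm : ‖∫ t in a..b, f K t‖ = (2*h) * N K := by
    rw [hintK, norm_smul, hCnorm, Real.norm_eq_abs, hba,
      _root_.abs_of_nonneg (by linarith : (0:ℝ) ≤ 2*h)]
  have hmain : (2*h) * N K ≤ M * (2*h) + ∑' k, bnd k := by
    have h1 : (∫ t in a..b, f K t) = (∑' k, ∫ t in a..b, f k t)
        - ∑' k, (if k = K then (0:ℂ) else ∫ t in a..b, f k t) := by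
      rw [hsplit]; ring
    calc (2*h) * N K = ‖∫ t in a..b, f K t‖ := hfKnorm.symm
      _ ≤ ‖∑' k, ∫ t in a..b, f k t‖
          + ‖∑' k, (if k = K then (0:ℂ) else ∫ t in a..b, f k t)‖ := by
        rw [h1]; exact norm_sub_le _ _
      _ ≤ M * (2*h) + ∑' k, bnd k := by
        apply add_le_add _ hT
        rw [← hinter]; exact hI
  have hq_alpha : 1 < q ^ α := (Real.one_lt_rpow_iff_of_pos hq0).2 (Or.inl ⟨hq, hu⟩)
  have hgeom : ∀ i:ℕ, ((q:ℝ)^i)^α = ((q:ℝ)^α)^i := by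
    intro i
    rw [← Real.rpow_natCast (q ^ α) i, ← Real.rpow_mul hq0.le, mul_comm α (i:ℝ),
      Real.rpow_mul hq0.le, Real.rpow_natCast]
  have hsum_geom : ∑ i ∈ Finset.range K, ((q:ℝ)^i)^α ≤ (q^K)^α / (q^α - 1) := by
    calc ∑ i ∈ Finset.range K, ((q:ℝ)^i)^α
        = ∑ i ∈ Finset.range K, ((q:ℝ)^α)^i := Finset.sum_congr rfl (fun i _ => hgeom i)
      _ = (((q:ℝ)^α)^K - 1)/((q:ℝ)^α - 1) := geom_sum_eq (ne_of_gt hq_alpha) K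
      _ ≤ ((q:ℝ)^α)^K/((q:ℝ)^α - 1) := by
          gcongr
          · linarith
      _ = (q^K)^α / (q^α - 1) := by rw [hgeom K]
  have h2m : 2/m = (2*q/(q-1)) * σ := by
    rw [hm', hσdef]
    have hqK : (q:ℝ)^K ≠ 0 := ne_of_gt (pow_pos hq0 K)
    field_simp
  have hfinset : ∑ i ∈ Finset.range (K+1), bnd i
      ≤ (2*q/((q-1)*(q^α - 1))) * ((q^K)^α * σ) := by
    have hbndK : bnd K = 0 := by simp [hbnddef]
    rw [Finset.sum_range_succ, hbndK, add_zero]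
    have hstep : ∀ i ∈ Finset.range K, bnd i ≤ ((q:ℝ)^i)^α * (2/m) := by
      intro i hi
      have hiK : i ≠ K := by
        have := Finset.mem_range.1 hi; omega
      rw [hbnddef]
      simp only [if_neg hiK]
      apply mul_le_mul_of_nonneg_right _ (by positivity)
      calc N i = ((q:ℝ)^i)^α * Real.exp (-(σ * q^i)) := rfl
        _ ≤ ((q:ℝ)^i)^α * 1 := by
            apply mul_le_mul_of_nonneg_left _ (by positivity)
            rw [← Real.exp_zero]
            exact Real.exp_le_exp.2 (neg_nonpos.2 (by positivity))
        _ = ((q:ℝ)^i)^α := mul_one _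
    calc ∑ i ∈ Finset.range K, bnd i ≤ ∑ i ∈ Finset.range K, ((q:ℝ)^i)^α * (2/m) :=
          Finset.sum_le_sum hstep
      _ = (∑ i ∈ Finset.range K, ((q:ℝ)^i)^α) * (2/m) := (Finset.sum_mul _ _ _).symm
      _ ≤ ((q^K)^α / (q^α - 1)) * (2/m) := by
          apply mul_le_mul_of_nonneg_right hsum_geom (by positivity)
      _ = ((q^K)^α / (q^α - 1)) * ((2*q/(q-1)) * σ) := by rw [h2m]
      _ = (2*q/((q-1)*(q^α - 1))) * ((q^K)^α * σ) := by
          field_simp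
  have htail : ∑' j:ℕ, bnd (j + (K+1))
      = ((2*q/(q-1)) * ∑' j:ℕ, ((q:ℝ)^(j+1))^α * Real.exp (-(1*q^(j+1)))) * ((q^K)^α * σ) := by
    have hterm' : ∀ j:ℕ, bnd (j + (K+1))
        = (2*q/(q-1)) * (((q:ℝ)^(j+1))^α * Real.exp (-(1*q^(j+1)))) * ((q^K)^α * σ) := by
      intro j
      have hjK : j + (K+1) ≠ K := by omega
      have hidx : j + (K+1) = K + (j+1) := by omega
      rw [hbnddef]
      simp only [if_neg hjK]
      have hNval : N (j + (K+1)) = ((q^K)^α * ((q:ℝ)^(j+1))^α) * Real.exp (-(1*q^(j+1))) := by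
        have e1 : N (j + (K+1)) = ((q:ℝ)^(j+(K+1)))^α * Real.exp (-(σ * q^(j+(K+1)))) := rfl
        rw [e1, hidx, pow_add, Real.mul_rpow (by positivity) (by positivity)]
        congr 2
        rw [← mul_assoc, hσqK]
      rw [hNval, h2m]
      ring
    calc ∑' j:ℕ, bnd (j + (K+1))
        = ∑' j:ℕ, ((2*q/(q-1)) * (((q:ℝ)^(j+1))^α * Real.exp (-(1*q^(j+1)))) * ((q^K)^α * σ)) :=
          tsum_congr hterm'
      _ = ((2*q/(q-1)) * ∑' j:ℕ, ((q:ℝ)^(j+1))^α * Real.exp (-(1*q^(j+1)))) * ((q^K)^α * σ) := by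
          rw [tsum_mul_right, tsum_mul_left]
  have hbnd_total : ∑' k, bnd k
      ≤ ((2*q/((q-1)*(q^α - 1)))
          + (2*q/(q-1)) * ∑' j:ℕ, ((q:ℝ)^(j+1))^α * Real.exp (-(1*q^(j+1)))) * ((q^K)^α * σ) := by
    rw [← Summable.sum_add_tsum_nat_add (K+1) hbnd_sum]
    calc ∑ i ∈ Finset.range (K+1), bnd i + ∑' j:ℕ, bnd (j + (K+1))
        ≤ (2*q/((q-1)*(q^α - 1))) * ((q^K)^α * σ)
          + ((2*q/(q-1)) * ∑' j:ℕ, ((q:ℝ)^(j+1))^α * Real.exp (-(1*q^(j+1)))) * ((q^K)^α * σ) :=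
          add_le_add hfinset (le_of_eq htail)
      _ = ((2*q/((q-1)*(q^α - 1)))
          + (2*q/(q-1)) * ∑' j:ℕ, ((q:ℝ)^(j+1))^α * Real.exp (-(1*q^(j+1)))) * ((q^K)^α * σ) := by
          ring
  calc (q^K)^α * Real.exp (-1) * (2*h) = (2*h) * N K := by rw [hNK]; ring
    _ ≤ M * (2*h) + ∑' k, bnd k := hmain
    _ ≤ M * (2*h)
        + ((2*q/((q-1)*(q^α - 1)))
          + (2*q/(q-1)) * ∑' j:ℕ, ((q:ℝ)^(j+1))^α * Real.exp (-(1*q^(j+1)))) * ((q^K)^α * σ) :=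
        add_le_add le_rfl hbnd_total
    _ = 2*h*M
        + ((2*q/((q-1)*(q^α - 1)))
          + (2*q/(q-1)) * ∑' j:ℕ, ((q:ℝ)^(j+1))^α * Real.exp (-(1*q^(j+1)))) * (q^K)^α * σ := by
        ring

theorem stmt_16 (u : ℂ) (hu : 0 < u.re) (q : ℝ) (hq : 1 < q) :
    ∀ ζ₀ : ℂ, ζ₀.re = 0 →
      ¬∃ (U : Set ℂ) (g : ℂ → ℂ), IsOpen U ∧ ζ₀ ∈ U ∧ DifferentiableOn ℂ g U ∧
        ∀ ζ ∈ U, 0 < ζ.re →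
          g ζ = ∑' k : ℕ, (q : ℂ) ^ ((k : ℂ) * u) * Complex.exp (-ζ * (q : ℂ) ^ k) := by
  intro ζ₀ hre
  rintro ⟨U, g, hUopen, hζ₀U, hgdiff, hgeq⟩
  have hq0 : 0 < q := lt_trans one_pos hq
  obtain ⟨ε, hε, hball⟩ := Metric.isOpen_iff.1 hUopen ζ₀ hζ₀U
  set h : ℝ := ε/4 with hh'
  have hh : 0 < h := by positivity
  have hsub : Metric.closedBall ζ₀ (2*h) ⊆ U := by
    intro z hz
    apply hball
    rw [Metric.mem_ball]
    have := Metric.mem_closedBall.1 hz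
    calc dist z ζ₀ ≤ 2*h := this
      _ < ε := by rw [hh']; linarith
  obtain ⟨M, hM⟩ := (isCompact_closedBall ζ₀ (2*h)).exists_bound_of_continuousOn
    ((hgdiff.continuousOn).mono hsub)
  set t₀ : ℝ := ζ₀.im with ht₀
  have hζ₀eq : ζ₀ = (t₀ : ℂ) * Complex.I := by
    apply Complex.ext <;> simp [hre, ht₀]
  -- boundedness hypothesis of main_est
  have hKb : ∀ K : ℕ, ((q:ℝ)^K)⁻¹ ≤ h → ∀ t : ℝ, t ∈ Set.Icc (t₀ - h) (t₀ + h) →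
      ‖∑' k : ℕ, (q:ℂ)^((k:ℂ)*u)
        * Complex.exp (-((((q:ℝ)^K)⁻¹ : ℝ) + (t:ℝ)*Complex.I : ℂ) * (q:ℂ)^k)‖ ≤ M := by
    intro K hKh t ht
    rw [Set.mem_Icc] at ht
    set σ : ℝ := ((q:ℝ)^K)⁻¹ with hσdef
    have hσ : 0 < σ := by positivity
    set ζ : ℂ := (σ:ℂ) + (t:ℂ)*Complex.I with hζdef
    have hζre : ζ.re = σ := by rw [hζdef]; simp
    have hζpos : 0 < ζ.re := by rw [hζre]; exact hσ
    have hζmem : ζ ∈ Metric.closedBall ζ₀ (2*h) := by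
      rw [Metric.mem_closedBall]
      have hdiff : ζ - ζ₀ = (σ:ℂ) + ((t - t₀ : ℝ):ℂ)*Complex.I := by
        rw [hζdef, hζ₀eq]; push_cast; ring
      calc dist ζ ζ₀ = ‖(σ:ℂ) + ((t - t₀ : ℝ):ℂ)*Complex.I‖ := by
            rw [dist_eq_norm, hdiff]
        _ ≤ ‖(σ:ℂ)‖ + ‖((t - t₀ : ℝ):ℂ)*Complex.I‖ := norm_add_le _ _
        _ ≤ h + h := by
            apply add_le_add
            · rw [Complex.norm_real, Real.norm_eq_abs, _root_.abs_of_pos hσ]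
              exact hKh
            · rw [norm_mul, Complex.norm_real, Complex.norm_I, mul_one, Real.norm_eq_abs]
              rw [abs_le]
              constructor <;> [linarith [ht.1]; linarith [ht.2]]
        _ = 2*h := by ring
    have hζU : ζ ∈ U := hsub hζmem
    rw [← hgeq ζ hζU hζpos]
    exact hM ζ hζmem
  -- choose K large
  have hgeomK : ∀ K:ℕ, ((q:ℝ)^K)^u.re = ((q:ℝ)^u.re)^K := by
    intro i
    rw [← Real.rpow_natCast (q ^ u.re) i, ← Real.rpow_mul hq0.le, mul_comm u.re (i:ℝ),
      Real.rpow_mul hq0.le, Real.rpow_natCast]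
  have hq_alpha : 1 < q ^ u.re := (Real.one_lt_rpow_iff_of_pos hq0).2 (Or.inl ⟨hq, hu⟩)
  have h1 : Tendsto (fun K:ℕ => ((q:ℝ)^K)⁻¹) atTop (𝓝 0) :=
    tendsto_inv_atTop_zero.comp (tendsto_pow_atTop_atTop_of_one_lt hq)
  have h2 : Tendsto (fun K:ℕ => ((q:ℝ)^K)^u.re) atTop atTop := by
    rw [show (fun K:ℕ => ((q:ℝ)^K)^u.re) = fun K:ℕ => ((q:ℝ)^u.re)^K from funext hgeomK]
    exact tendsto_pow_atTop_atTop_of_one_lt hq_alpha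
  set Cst : ℝ := 2*q/((q-1)*(q^u.re - 1))
      + (2*q/(q-1)) * ∑' j:ℕ, ((q:ℝ)^(j+1))^u.re * Real.exp (-(1*q^(j+1))) with hCst
  have e1 : ∀ᶠ K:ℕ in atTop, ((q:ℝ)^K)⁻¹ ≤ h := h1.eventually_le_const hh
  have e2 : ∀ᶠ K:ℕ in atTop, Cst * ((q:ℝ)^K)⁻¹ ≤ h * Real.exp (-1) := by
    have hc := h1.const_mul Cst
    rw [mul_zero] at hc
    exact hc.eventually_le_const (by positivity)
  have e3 : ∀ᶠ K:ℕ in atTop, 2*M*Real.exp 1 + 1 ≤ ((q:ℝ)^K)^u.re :=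
    h2.eventually_ge_atTop _
  obtain ⟨K, hK1, hK2, hK3⟩ := (e1.and (e2.and e3)).exists
  have hest := main_est u hu q hq t₀ h M hh K (hKb K hK1)
  set P : ℝ := ((q:ℝ)^K)^u.re with hP
  set σ : ℝ := ((q:ℝ)^K)⁻¹ with hσdef
  have hP0 : 0 < P := by rw [hP]; positivity
  have hs1 : Cst * P * σ ≤ P * (h * Real.exp (-1)) := by
    calc Cst * P * σ = P * (Cst * σ) := by ring
      _ ≤ P * (h * Real.exp (-1)) := mul_le_mul_of_nonneg_left hK2 hP0.le
  have hs2 : P * Real.exp (-1) * (2*h) ≤ 2*h*M + Cst * P * σ := hest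
  have hs3 : P * (h * Real.exp (-1)) ≤ 2*h*M := by nlinarith [Real.exp_pos (-1)]
  have he : Real.exp (-1) * Real.exp 1 = 1 := by rw [← Real.exp_add]; norm_num
  have h4 := mul_le_mul_of_nonneg_right hs3 (Real.exp_pos 1).le
  have h5 : P * (h * Real.exp (-1)) * Real.exp 1 = P * h := by
    rw [mul_assoc P (h * Real.exp (-1)) (Real.exp 1),
      mul_assoc h (Real.exp (-1)) (Real.exp 1), he, mul_one]
  have hPh : P * h ≤ 2*h*M*Real.exp 1 := by rw [← h5]; exact h4
  nlinarith [mul_le_mul_of_nonneg_right hK3 hh.le]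
end

section
/- Fix u ∈ ℂ with Re u > 0 and v > 0. Write φ(n) = arg Γ(u + 2ivn/π) (mod 2π). Then as n → ∞, φ(n+1) - φ(n) = (2v/π)·ln(2vn/π) + O(1/n) modulo 2π. -/
open Complex Real Filter Asymptotics Finset Topology


noncomputable def LN (z : ℂ) (N : ℕ) : ℂ :=
  z * Real.log N + Real.log (Nat.factorial N) - ∑ k ∈ Finset.range (N + 1), Complex.log (z + k)

lemma exp_LN (z : ℂ) (hz : 0 < z.re) (N : ℕ) (hN : 1 ≤ N) :
    Complex.exp (LN z N) = Complex.GammaSeq z N := by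
  have hk : ∀ k : ℕ, z + k ≠ 0 := by
    intro k h
    have : (z + k).re = 0 := by rw [h]; simp
    simp only [Complex.add_re, Complex.natCast_re] at this
    have : (0:ℝ) ≤ (k:ℝ) := k.cast_nonneg
    nlinarith [k.cast_nonneg (α := ℝ)]
  rw [LN, Complex.GammaSeq]
  rw [Complex.exp_sub, Complex.exp_add, Complex.exp_sum]
  have h1 : Complex.exp (z * Real.log N) = (N:ℂ) ^ z := by
    rw [Complex.cpow_def_of_ne_zero (Nat.cast_ne_zero.mpr (Nat.one_le_iff_ne_zero.mp hN)),
      ← Complex.natCast_log, mul_comm]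
  have h2 : Complex.exp (Real.log (Nat.factorial N)) = ((Nat.factorial N : ℝ) : ℂ) := by
    rw [← Complex.ofReal_exp, Real.exp_log (by positivity)]
  have h3 : ∀ k ∈ Finset.range (N+1), Complex.exp (Complex.log (z + k)) = z + k := by
    intro k _; exact Complex.exp_log (hk k)
  rw [h1, h2, Finset.prod_congr rfl h3]
  push_cast
  ring



lemma zk_ne (z : ℂ) (hz : 0 < z.re) (k : ℕ) : z + k ≠ 0 := by
  intro h
  have : (z + k).re = 0 := by rw [h]; simp
  simp only [Complex.add_re, Complex.natCast_re] at this
  nlinarith [k.cast_nonneg (α := ℝ)]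

lemma LN_succ_sub (z : ℂ) (hz : 0 < z.re) (j : ℕ) (hj : 1 ≤ j) :
    LN z (j+1) - LN z j
      = z * Real.log (1 + 1/j) - Complex.log (1 + z/(j+1)) := by
  have hj0 : (0:ℝ) < j := by exact_mod_cast hj
  have hx : (1 + z/(j+1)) ≠ 0 := by
    intro h
    have : (1 + z/(j+1)).re = 0 := by rw [h]; simp
    have hre : (z/(j+1)).re = z.re/(j+1) := by
      rw [show ((j:ℂ)+1) = ((j+1:ℝ):ℂ) by push_cast; ring, Complex.div_ofReal_re]
    simp only [Complex.add_re, Complex.one_re, hre] at this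
    have : z.re / ((j:ℝ)+1) = -1 := by linarith
    nlinarith [div_pos hz (by linarith : (0:ℝ) < (j:ℝ)+1)]
  have hmul : (Complex.ofReal ((j:ℝ)+1)) * (1 + z/((j:ℂ)+1)) = z + ((j:ℂ)+1) := by
    have hne : ((j:ℂ)+1) ≠ 0 := by
      intro h
      have := congrArg Complex.re h
      simp only [Complex.add_re, Complex.natCast_re, Complex.one_re, Complex.zero_re] at this
      nlinarith [j.cast_nonneg (α := ℝ)]
    push_cast
    field_simp
    ring
  have hlog : Complex.log (z + ((j:ℂ)+1)) = Real.log ((j:ℝ)+1) + Complex.log (1 + z/(j+1)) := by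
    rw [← hmul, Complex.log_ofReal_mul (by linarith : (0:ℝ) < (j:ℝ)+1) hx]
  have hfac : Real.log (Nat.factorial (j+1)) = Real.log ((j:ℝ)+1) + Real.log (Nat.factorial j) := by
    rw [Nat.factorial_succ]
    push_cast
    rw [Real.log_mul (by positivity) (by positivity)]
  have hlogj : Real.log ((j:ℝ)+1) - Real.log j = Real.log (1 + 1/j) := by
    rw [← Real.log_div (by positivity) (by positivity)]
    congr 1
    field_simp
  have hsum : ∑ k ∈ Finset.range (j+1+1), Complex.log (z + k)
      = ∑ k ∈ Finset.range (j+1), Complex.log (z + k) + Complex.log (z + (j+1)) := by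
    rw [Finset.sum_range_succ]
    push_cast
    ring_nf
  rw [LN, LN, hsum, hlog, hfac]
  push_cast
  rw [← hlogj]
  push_cast
  ring




lemma G_bound (z : ℂ) (hz : 0 < z.re) :
    ∀ᶠ j : ℕ in atTop, ‖LN z (j+1) - LN z j‖ ≤ (‖z‖ + ‖z‖^2) * (1/(j:ℝ)^2) := by
  have hev : ∀ᶠ j : ℕ in atTop, (1:ℕ) ≤ j ∧ ‖z‖ ≤ ((j:ℝ)+1)/2 := by
    filter_upwards [eventually_ge_atTop 1, eventually_ge_atTop (Nat.ceil (2*‖z‖))] with j h1 h2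
    refine ⟨h1, ?_⟩
    have : 2*‖z‖ ≤ (j:ℝ) := le_trans (Nat.le_ceil _) (by exact_mod_cast h2)
    linarith
  filter_upwards [hev] with j ⟨hj, hzj⟩
  have hj0 : (0:ℝ) < j := by exact_mod_cast hj
  rw [LN_succ_sub z hz j hj]
  set w : ℂ := z/((j:ℂ)+1) with hw
  have hwnorm : ‖w‖ = ‖z‖/((j:ℝ)+1) := by
    rw [hw, norm_div]
    congr 1
    rw [show ((j:ℂ)+1) = Complex.ofReal ((j:ℝ)+1) by push_cast; ring]
    rw [Complex.norm_real, Real.norm_eq_abs, abs_of_pos (by linarith)]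
  have hwhalf : ‖w‖ ≤ 1/2 := by
    rw [hwnorm]
    rw [div_le_div_iff₀ (by linarith) (by norm_num)]
    linarith
  have key : z * Real.log (1 + 1/j) - Complex.log (1 + w)
      = z * ((Real.log (1 + 1/j) - 1/((j:ℝ)+1)) : ℝ) + (w - Complex.log (1 + w)) := by
    rw [hw]
    push_cast
    field_simp
    ring
  rw [key]
  have h1 : |Real.log (1 + 1/(j:ℝ)) - 1/((j:ℝ)+1)| ≤ 1/(j:ℝ)^2 := by
    have hup : Real.log (1 + 1/(j:ℝ)) ≤ 1/(j:ℝ) := by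
      have := Real.log_le_sub_one_of_pos (show (0:ℝ) < 1 + 1/(j:ℝ) by positivity)
      linarith
    have hlo : 1/((j:ℝ)+1) ≤ Real.log (1 + 1/(j:ℝ)) := by
      have := Real.one_sub_inv_le_log_of_pos (show (0:ℝ) < 1 + 1/(j:ℝ) by positivity)
      have heq : 1 - (1 + 1/(j:ℝ))⁻¹ = 1/((j:ℝ)+1) := by
        rw [inv_eq_one_div]
        field_simp; ring
      linarith [heq ▸ this]
    have hj2 : (0:ℝ) ≤ 1/(j:ℝ)^2 := by positivity
    rw [abs_le]
    constructor
    · linarith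
    · have : 1/(j:ℝ) - 1/((j:ℝ)+1) ≤ 1/(j:ℝ)^2 := by
        rw [div_sub_div _ _ (ne_of_gt hj0) (by linarith)]
        rw [div_le_div_iff₀ (by positivity) (by positivity)]
        ring_nf
        nlinarith
      linarith
  have h2 : ‖w - Complex.log (1 + w)‖ ≤ ‖z‖^2 * (1/(j:ℝ)^2) := by
    rw [← norm_neg, neg_sub]
    have h15 : (0:ℝ) < 1 - ‖w‖ := by linarith
    have hinv : (1 - ‖w‖)⁻¹ ≤ 2 := by
      rw [inv_eq_one_div, div_le_iff₀ h15]; linarith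
    calc ‖Complex.log (1 + w) - w‖ ≤ ‖w‖^2 * (1 - ‖w‖)⁻¹ / 2 :=
          Complex.norm_log_one_add_sub_self_le (by linarith)
      _ ≤ ‖w‖^2 * 2 / 2 := by gcongr
      _ = ‖w‖^2 := by ring
      _ ≤ ‖z‖^2 * (1/(j:ℝ)^2) := by
          rw [hwnorm, div_pow]
          have h2j : ((j:ℝ))^2 ≤ ((j:ℝ)+1)^2 := by nlinarith
          calc ‖z‖^2/((j:ℝ)+1)^2 ≤ ‖z‖^2/(j:ℝ)^2 := by gcongr <;> positivity
            _ = ‖z‖^2 * (1/(j:ℝ)^2) := by ring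
  calc ‖z * ((Real.log (1 + 1/j) - 1/((j:ℝ)+1)) : ℝ) + (w - Complex.log (1 + w))‖
      ≤ ‖z * ((Real.log (1 + 1/j) - 1/((j:ℝ)+1)) : ℝ)‖ + ‖w - Complex.log (1 + w)‖ :=
        norm_add_le _ _
    _ ≤ ‖z‖ * (1/(j:ℝ)^2) + ‖z‖^2 * (1/(j:ℝ)^2) := by
        apply add_le_add _ h2
        rw [norm_mul, Complex.norm_real, Real.norm_eq_abs]
        exact mul_le_mul_of_nonneg_left h1 (norm_nonneg z)
    _ = (‖z‖ + ‖z‖^2) * (1/(j:ℝ)^2) := by ring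

lemma exists_logGamma (z : ℂ) (hz : 0 < z.re) :
    ∃ L : ℂ, Tendsto (LN z) atTop (𝓝 L) ∧ Complex.exp L = Complex.Gamma z := by
  set G : ℕ → ℂ := fun j => LN z (j+1) - LN z j with hG
  have hsum : Summable G := by
    apply Summable.of_norm_bounded_eventually_nat (g := fun j => (‖z‖ + ‖z‖^2) * (1/(j:ℝ)^2))
    · exact (summable_one_div_nat_pow.mpr one_lt_two).mul_left _
    · exact G_bound z hz
  have htel : ∀ N, ∑ j ∈ Finset.range N, G j = LN z N - LN z 0 :=
    fun N => Finset.sum_range_sub (LN z) N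
  have hlim : Tendsto (LN z) atTop (𝓝 (LN z 0 + ∑' j, G j)) := by
    have := hsum.hasSum.tendsto_sum_nat
    have h2 : Tendsto (fun N => LN z 0 + ∑ j ∈ Finset.range N, G j) atTop
        (𝓝 (LN z 0 + ∑' j, G j)) := tendsto_const_nhds.add this
    refine h2.congr fun N => ?_
    rw [htel]; ring
  refine ⟨_, hlim, ?_⟩
  have h1 : Tendsto (fun N => Complex.exp (LN z N)) atTop (𝓝 (Complex.exp (LN z 0 + ∑' j, G j))) :=
    (Complex.continuous_exp.continuousAt.tendsto).comp hlim
  have h2 : Tendsto (fun N => Complex.exp (LN z N)) atTop (𝓝 (Complex.Gamma z)) := by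
    apply (Complex.GammaSeq_tendsto_Gamma z).congr'
    filter_upwards [eventually_ge_atTop 1] with N hN
    exact (exp_LN z hz N hN).symm
  exact tendsto_nhds_unique h1 h2



lemma mvt_upper (f f' : ℝ → ℝ) {c d C : ℝ} (h : c ≤ d)
    (hf : ∀ s, HasDerivAt f (f' s) s)
    (hC : ∀ s ∈ Set.Icc c d, f' s ≤ C) : f d - f c ≤ C * (d - c) := by
  refine Convex.image_sub_le_mul_sub_of_deriv_le (convex_Icc c d)
    (fun s _ => (hf s).continuousAt.continuousWithinAt)
    (fun s _ => ((hf s).differentiableAt).differentiableWithinAt)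
    (fun s hs => ?_) c (Set.left_mem_Icc.mpr h) d (Set.right_mem_Icc.mpr h) h
  rw [(hf s).deriv]
  exact hC s (interior_subset hs)

lemma mvt_lower (f f' : ℝ → ℝ) {c d C : ℝ} (h : c ≤ d)
    (hf : ∀ s, HasDerivAt f (f' s) s)
    (hC : ∀ s ∈ Set.Icc c d, C ≤ f' s) : C * (d - c) ≤ f d - f c := by
  have := mvt_upper (fun s => -f s) (fun s => -f' s) h
    (fun s => (hf s).neg) (fun s hs => neg_le_neg (hC s hs))
  linarith

noncomputable def phi (a R s : ℝ) : ℝ := Real.log ((a+s)^2 + R^2) / 2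
noncomputable def gg (a R s : ℝ) : ℝ := (a+s) / ((a+s)^2 + R^2)

lemma q_pos {a R : ℝ} (hR : 0 < R) (s : ℝ) : 0 < (a+s)^2 + R^2 := by positivity

lemma hasDerivAt_q (a R s : ℝ) : HasDerivAt (fun s => (a+s)^2 + R^2) (2*(a+s)) s := by
  have h1 : HasDerivAt (fun s : ℝ => a + s) 1 s := (hasDerivAt_id s).const_add a
  have h2 := (h1.pow 2).add_const (R^2)
  refine h2.congr_deriv ?_
  ring

lemma hasDerivAt_phi (a R : ℝ) (hR : 0 < R) (s : ℝ) :
    HasDerivAt (phi a R) (gg a R s) s := by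
  have h1 := (Real.hasDerivAt_log (q_pos hR s).ne').comp s (hasDerivAt_q a R s)
  have h2 := h1.div_const 2
  refine h2.congr_deriv ?_
  unfold gg
  field_simp

lemma hasDerivAt_gg (a R : ℝ) (hR : 0 < R) (s : ℝ) :
    HasDerivAt (gg a R) ((R^2 - (a+s)^2) / ((a+s)^2 + R^2)^2) s := by
  have h1 : HasDerivAt (fun s : ℝ => a + s) 1 s := (hasDerivAt_id s).const_add a
  have h2 := h1.div (hasDerivAt_q a R s) (q_pos hR s).ne'
  refine h2.congr_deriv ?_
  field_simp
  ring

lemma hasDerivAt_arctan_div (x : ℝ) (hx : 0 < x) (t : ℝ) :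
    HasDerivAt (fun t => Real.arctan (t/x)) (x/(x^2+t^2)) t := by
  have h1 : HasDerivAt (fun t : ℝ => t / x) (1/x) t := (hasDerivAt_id t).div_const x
  have h2 := (Real.hasDerivAt_arctan (t/x)).comp t h1
  refine h2.congr_deriv ?_
  have hx2 : (0:ℝ) < x^2 + t^2 := by positivity
  field_simp

lemma arctan_diff_le (x T₁ T₂ : ℝ) (hx : 0 < x) (hT1 : 0 ≤ T₁) (h12 : T₁ ≤ T₂) :
    Real.arctan (T₂/x) - Real.arctan (T₁/x) ≤ (T₂-T₁) * (x/(x^2+T₁^2)) := by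
  rw [mul_comm]
  apply mvt_upper _ (fun t => x/(x^2+t^2)) h12 (hasDerivAt_arctan_div x hx)
  intro t ht
  have h1 : T₁^2 ≤ t^2 := by nlinarith [ht.1, ht.2]
  gcongr
  all_goals first | positivity | linarith

lemma arctan_diff_ge (x T₁ T₂ : ℝ) (hx : 0 < x) (hT1 : 0 ≤ T₁) (h12 : T₁ ≤ T₂) :
    (T₂-T₁) * (x/(x^2+T₂^2)) ≤ Real.arctan (T₂/x) - Real.arctan (T₁/x) := by
  rw [mul_comm]
  apply mvt_lower _ (fun t => x/(x^2+t^2)) h12 (hasDerivAt_arctan_div x hx)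
  intro t ht
  have h1 : t^2 ≤ T₂^2 := by nlinarith [ht.1, ht.2]
  gcongr
  all_goals first | positivity | linarith

lemma gg_sub_bound (a R k : ℝ) (hk : 0 ≤ a + k) (hR : 0 < R) {s : ℝ}
    (hs : s ∈ Set.Icc k (k+1)) : |gg a R s - gg a R k| ≤ 1/((a+k)^2+R^2) := by
  obtain ⟨hs1, hs2⟩ := hs
  set M := 1/((a+k)^2+R^2) with hM
  have hMpos : 0 < M := by rw [hM]; positivity
  have hbound : ∀ t ∈ Set.Icc k s, |(R^2 - (a+t)^2) / ((a+t)^2 + R^2)^2| ≤ M := by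
    intro t ht
    have hat : a + k ≤ a + t := by linarith [ht.1]
    have h1 : |R^2 - (a+t)^2| ≤ (a+t)^2 + R^2 := by
      rw [abs_le]; constructor <;> nlinarith [sq_nonneg (a+t)]
    rw [abs_div, abs_of_pos (by positivity : (0:ℝ) < ((a+t)^2+R^2)^2), hM]
    calc |R^2 - (a+t)^2| / ((a+t)^2 + R^2)^2 ≤ ((a+t)^2 + R^2) / ((a+t)^2 + R^2)^2 := by
          gcongr
      _ = 1/((a+t)^2 + R^2) := by
          have hq : ((a+t)^2 + R^2) ≠ 0 := (q_pos hR t).ne'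
          field_simp
      _ ≤ 1/((a+k)^2 + R^2) := by
          gcongr
          all_goals first | positivity | nlinarith
  have hup := mvt_upper (gg a R) _ hs1 (hasDerivAt_gg a R hR)
    (fun t ht => (abs_le.mp (hbound t ht)).2)
  have hlo := mvt_lower (gg a R) _ hs1 (hasDerivAt_gg a R hR)
    (fun t ht => (abs_le.mp (hbound t ht)).1)
  rw [abs_le]
  constructor
  · nlinarith
  · nlinarith

lemma phi_diff_bound (a R k : ℝ) (hk : 0 ≤ a + k) (hR : 0 < R) :
    |(phi a R (k+1) - phi a R k) - gg a R k| ≤ 1/((a+k)^2+R^2) := by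
  set M := 1/((a+k)^2+R^2) with hM
  have hf : ∀ s, HasDerivAt (fun s => phi a R s - s * gg a R k) (gg a R s - gg a R k) s := by
    intro s
    have h1 := (hasDerivAt_phi a R hR s).sub ((hasDerivAt_id s).mul_const (gg a R k))
    refine h1.congr_deriv ?_
    ring
  have hup := mvt_upper _ _ (by linarith : k ≤ k+1) hf
    (fun s hs => (abs_le.mp (gg_sub_bound a R k hk hR hs)).2)
  have hlo := mvt_lower _ _ (by linarith : k ≤ k+1) hf
    (fun s hs => (abs_le.mp (gg_sub_bound a R k hk hR hs)).1)
  rw [abs_le]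
  constructor
  · nlinarith
  · nlinarith



lemma arg_exp_mod (w : ℂ) : ∃ k : ℤ, Complex.arg (Complex.exp w) = w.im + 2 * π * k := by
  have h0 : Complex.exp w ≠ 0 := Complex.exp_ne_zero w
  have h1 : (‖Complex.exp w‖ : ℂ) * Complex.exp (Complex.arg (Complex.exp w) * Complex.I)
      = Complex.exp w := Complex.norm_mul_exp_arg_mul_I _
  have h2 : Complex.exp w = (Real.exp w.re : ℂ) * Complex.exp (w.im * Complex.I) := by
    rw [Complex.ofReal_exp, ← Complex.exp_add, Complex.re_add_im]
  have habs : ‖Complex.exp w‖ = Real.exp w.re := Complex.norm_exp w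
  have hre : (0:ℝ) < Real.exp w.re := Real.exp_pos _
  have h3 : Complex.exp (Complex.arg (Complex.exp w) * Complex.I) = Complex.exp (w.im * Complex.I) := by
    have := h1.trans h2
    rw [habs] at this
    exact mul_left_cancel₀ (by exact_mod_cast hre.ne') this
  have h4 : Complex.exp ((Complex.arg (Complex.exp w) - w.im : ℝ) * Complex.I) = 1 := by
    push_cast
    rw [sub_mul, Complex.exp_sub, h3, div_self (Complex.exp_ne_zero _)]
  obtain ⟨k, hk⟩ := Complex.exp_eq_one_iff.mp h4
  refine ⟨k, ?_⟩
  have hI : ((Complex.arg (Complex.exp w) - w.im : ℝ) : ℂ) = (k:ℂ) * (2 * π) := by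
    have h5 : ((Complex.arg (Complex.exp w) - w.im : ℝ) : ℂ) * Complex.I = (k:ℂ) * (2*π) * Complex.I := by
      rw [hk]; ring
    exact mul_right_cancel₀ Complex.I_ne_zero h5
  have h6 : (Complex.arg (Complex.exp w) - w.im : ℝ) = (k:ℝ) * (2*π) := by
    exact_mod_cast hI
  linarith

lemma arg_eq_arctan_of_re_pos {w : ℂ} (hw : 0 < w.re) :
    Complex.arg w = Real.arctan (w.im / w.re) := by
  have h1 : -(π/2) < Complex.arg w := Complex.neg_pi_div_two_lt_arg_iff.mpr (Or.inl hw)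
  have h2 : Complex.arg w < π/2 := Complex.arg_lt_pi_div_two_iff.mpr (Or.inl hw)
  rw [← Complex.tan_arg w, Real.arctan_tan h1 h2]





lemma sum_inv_le (a R : ℝ) (ha : 0 ≤ a) (hR : 1 ≤ R) (N : ℕ) :
    ∑ k ∈ Finset.range (N+1), 1/((a+(k:ℝ))^2+R^2) ≤ 3/R := by
  have hR0 : (0:ℝ) < R := lt_of_lt_of_le one_pos hR
  rw [Finset.sum_range_succ']
  have h0 : 1/((a+(0:ℕ):ℝ)^2+R^2) ≤ 1/R := by
    simp only [Nat.cast_zero, add_zero]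
    calc (1:ℝ)/(a^2+R^2) ≤ 1/R^2 := by gcongr <;> nlinarith
      _ ≤ 1/R := by
          rw [div_le_div_iff₀ (by positivity) hR0]
          nlinarith
  have hterm : ∀ k : ℕ, 1/((a+((k+1:ℕ)):ℝ)^2+R^2)
      ≤ (1/R) * (Real.arctan (((k:ℝ)+1)/R) - Real.arctan ((k:ℝ)/R)) := by
    intro k
    have hmvt := mvt_lower (fun t => Real.arctan (t/R)) (fun t => R/(R^2+t^2))
      (by linarith : (k:ℝ) ≤ (k:ℝ)+1) (fun t => by simpa [add_comm] using hasDerivAt_arctan_div R hR0 t)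
      (C := R/(R^2+((k:ℝ)+1)^2)) ?_
    · have hk1 : (0:ℝ) < R^2+((k:ℝ)+1)^2 := by positivity
      have h2 : 1/((a+((k+1:ℕ)):ℝ)^2+R^2) ≤ 1/(((k:ℝ)+1)^2+R^2) := by
        apply one_div_le_one_div_of_le (by positivity)
        push_cast
        nlinarith [k.cast_nonneg (α := ℝ)]
      calc 1/((a+((k+1:ℕ)):ℝ)^2+R^2) ≤ 1/(((k:ℝ)+1)^2+R^2) := h2
        _ = (1/R) * (R/(R^2+((k:ℝ)+1)^2)) := by
            field_simp
            ring
        _ ≤ (1/R) * (Real.arctan (((k:ℝ)+1)/R) - Real.arctan ((k:ℝ)/R)) := by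
            apply mul_le_mul_of_nonneg_left _ (by positivity)
            simpa using hmvt
    · intro t ht
      have h1 : t^2 ≤ ((k:ℝ)+1)^2 := by nlinarith [ht.1, ht.2, k.cast_nonneg (α := ℝ)]
      show R/(R^2+((k:ℝ)+1)^2) ≤ R/(R^2+t^2)
      gcongr
      all_goals first | positivity | linarith
  calc ∑ k ∈ Finset.range N, 1/((a+((k+1:ℕ)):ℝ)^2+R^2) + 1/((a+((0:ℕ)):ℝ)^2+R^2)
      ≤ (∑ k ∈ Finset.range N, (1/R) * (Real.arctan (((k:ℝ)+1)/R) - Real.arctan ((k:ℝ)/R))) + 1/R := by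
        apply add_le_add _ h0
        exact Finset.sum_le_sum (fun k _ => hterm k)
    _ = (1/R) * Real.arctan ((N:ℝ)/R) + 1/R := by
        rw [← Finset.mul_sum]
        congr 2
        have := Finset.sum_range_sub (fun k : ℕ => Real.arctan ((k:ℝ)/R)) N
        rw [show (∑ k ∈ Finset.range N, (Real.arctan (((k:ℝ)+1)/R) - Real.arctan ((k:ℝ)/R)))
          = ∑ k ∈ Finset.range N, ((fun k : ℕ => Real.arctan ((k:ℝ)/R)) (k+1) - (fun k : ℕ => Real.arctan ((k:ℝ)/R)) k) from ?_, this]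
        · simp
        · apply Finset.sum_congr rfl
          intro k _
          push_cast
          ring_nf
    _ ≤ (1/R) * 2 + 1/R := by
        have harc : Real.arctan ((N:ℝ)/R) ≤ 2 := by
          calc Real.arctan ((N:ℝ)/R) ≤ π/2 := le_of_lt (Real.arctan_lt_pi_div_two _)
            _ ≤ 2 := by linarith [Real.pi_le_four]
        have h1R : (0:ℝ) ≤ 1/R := by positivity
        nlinarith
    _ ≤ 3/R := by
        apply le_of_eq
        ring




lemma sum_gg_bound (a R : ℝ) (ha : 0 ≤ a) (hR : 1 ≤ R) (N : ℕ) :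
    |(∑ k ∈ Finset.range (N+1), gg a R (k:ℝ)) - (phi a R ((N:ℝ)+1) - phi a R 0)| ≤ 3/R := by
  have hR0 : (0:ℝ) < R := lt_of_lt_of_le one_pos hR
  have htel : phi a R ((N:ℝ)+1) - phi a R 0
      = ∑ k ∈ Finset.range (N+1), (phi a R ((k:ℝ)+1) - phi a R (k:ℝ)) := by
    have h := Finset.sum_range_sub (fun k : ℕ => phi a R (k:ℝ)) (N+1)
    have h2 : ∑ k ∈ Finset.range (N+1), (phi a R ((k:ℝ)+1) - phi a R (k:ℝ))
        = ∑ i ∈ Finset.range (N+1), (phi a R ((i+1:ℕ):ℝ) - phi a R (i:ℝ)) := by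
      apply Finset.sum_congr rfl
      intro k _
      push_cast
      ring_nf
    rw [h2, h]
    push_cast
    ring_nf
  rw [htel, ← Finset.sum_sub_distrib]
  calc |∑ k ∈ Finset.range (N+1), (gg a R (k:ℝ) - (phi a R ((k:ℝ)+1) - phi a R (k:ℝ)))|
      ≤ ∑ k ∈ Finset.range (N+1), |gg a R (k:ℝ) - (phi a R ((k:ℝ)+1) - phi a R (k:ℝ))| :=
        Finset.abs_sum_le_sum_abs _ _
    _ ≤ ∑ k ∈ Finset.range (N+1), 1/((a+(k:ℝ))^2+R^2) := by
        apply Finset.sum_le_sum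
        intro k _
        rw [abs_sub_comm]
        exact phi_diff_bound a R (k:ℝ) (by positivity) hR0
    _ ≤ 3/R := sum_inv_le a R ha hR N

lemma log_sub_phi_tendsto (a R : ℝ) (hR : 0 < R) :
    Tendsto (fun N : ℕ => Real.log N - phi a R ((N:ℝ)+1)) atTop (𝓝 0) := by
  have hq : ∀ N : ℕ, (0:ℝ) < (a+((N:ℝ)+1))^2 + R^2 := fun N => by positivity
  have heq : ∀ᶠ N : ℕ in atTop, Real.log N - phi a R ((N:ℝ)+1)
      = -(Real.log (((a+((N:ℝ)+1))^2 + R^2)/(N:ℝ)^2) / 2) := by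
    filter_upwards [eventually_ge_atTop 1] with N hN
    have hN0 : (0:ℝ) < N := by exact_mod_cast hN
    rw [Real.log_div (hq N).ne' (by positivity), phi]
    rw [show Real.log ((N:ℝ)^2) = 2 * Real.log N by
      rw [Real.log_pow]; push_cast; ring]
    ring
  have hlim : Tendsto (fun N : ℕ => ((a+((N:ℝ)+1))^2 + R^2)/(N:ℝ)^2) atTop (𝓝 1) := by
    have h1 : Tendsto (fun N : ℕ => (a+1)/(N:ℝ)) atTop (𝓝 0) :=
      tendsto_const_div_atTop_nhds_zero_nat (a+1)
    have h2 : Tendsto (fun N : ℕ => R/(N:ℝ)) atTop (𝓝 0) :=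
      tendsto_const_div_atTop_nhds_zero_nat R
    have h3 : Tendsto (fun N : ℕ => ((a+1)/(N:ℝ) + 1)^2 + (R/(N:ℝ))^2) atTop (𝓝 ((0+1)^2 + 0^2)) := by
      apply Tendsto.add
      · exact (h1.add tendsto_const_nhds).pow 2
      · exact h2.pow 2
    have h4 : ∀ᶠ N : ℕ in atTop, ((a+1)/(N:ℝ) + 1)^2 + (R/(N:ℝ))^2
        = ((a+((N:ℝ)+1))^2 + R^2)/(N:ℝ)^2 := by
      filter_upwards [eventually_ge_atTop 1] with N hN
      have hN0 : (N:ℝ) ≠ 0 := by positivity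
      field_simp
      ring
    have := h3.congr' h4
    simpa using this
  have hcont : Tendsto (fun x : ℝ => -(Real.log x / 2)) (𝓝 1) (𝓝 0) := by
    have := (Real.continuousAt_log one_ne_zero).tendsto
    rw [Real.log_one] at this
    simpa using (this.div_const 2).neg
  have hfin := hcont.comp hlim
  exact Tendsto.congr' (EventuallyEq.symm heq) hfin




lemma LN_im (z : ℂ) (N : ℕ) :
    (LN z N).im = z.im * Real.log N - ∑ k ∈ Finset.range (N+1), Complex.arg (z + k) := by
  rw [LN]
  simp only [Complex.sub_im, Complex.add_im, Complex.mul_im, Complex.ofReal_re,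
    Complex.ofReal_im, Complex.im_sum, Complex.log_im]
  ring

lemma ImL_diff_bounds (z₁ z₂ : ℂ) (ha : 0 < z₁.re) (hre : z₂.re = z₁.re)
    {T₁ T₂ : ℝ} (hT₁ : z₁.im = T₁) (hT₂ : z₂.im = T₂) (h1 : 1 ≤ T₁) (h12 : T₁ ≤ T₂) (D : ℝ)
    (hD : Tendsto (fun N : ℕ => (LN z₂ N).im - (LN z₁ N).im) atTop (𝓝 D)) :
    (T₂-T₁) * phi z₁.re T₁ 0 - (T₂-T₁) * (3/T₁) ≤ D ∧
      D ≤ (T₂-T₁) * phi z₁.re T₂ 0 + (T₂-T₁) * (3/T₂) := by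
  set a := z₁.re with hadef
  have hT1pos : (0:ℝ) < T₁ := lt_of_lt_of_le one_pos h1
  have hT2pos : (0:ℝ) < T₂ := lt_of_lt_of_le hT1pos h12
  have hδ : (0:ℝ) ≤ T₂ - T₁ := by linarith
  have hxk : ∀ k : ℕ, (0:ℝ) < a + k := fun k => by
    have := k.cast_nonneg (α := ℝ); linarith
  -- formula for the difference
  have hSeq : ∀ N : ℕ, (LN z₂ N).im - (LN z₁ N).im
      = (T₂-T₁) * Real.log N
        - ∑ k ∈ Finset.range (N+1),
            (Real.arctan (T₂/(a+(k:ℝ))) - Real.arctan (T₁/(a+(k:ℝ)))) := by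
    intro N
    rw [LN_im, LN_im]
    have harg : ∀ k : ℕ, Complex.arg (z₁ + k) = Real.arctan (T₁/(a+(k:ℝ))) := by
      intro k
      rw [arg_eq_arctan_of_re_pos (by simp only [Complex.add_re, Complex.natCast_re]; exact hxk k)]
      simp only [Complex.add_im, Complex.natCast_im, Complex.add_re, Complex.natCast_re]
      rw [hT₁, add_zero]
    have harg2 : ∀ k : ℕ, Complex.arg (z₂ + k) = Real.arctan (T₂/(a+(k:ℝ))) := by
      intro k
      rw [arg_eq_arctan_of_re_pos (by
        simp only [Complex.add_re, Complex.natCast_re, hre]; exact hxk k)]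
      simp only [Complex.add_im, Complex.natCast_im, Complex.add_re, Complex.natCast_re, hre]
      rw [hT₂, add_zero]
    rw [Finset.sum_congr rfl (fun k _ => harg k), Finset.sum_congr rfl (fun k _ => harg2 k),
      hT₁, hT₂, Finset.sum_sub_distrib]
    ring
  -- lower bound
  constructor
  · have hlow : ∀ N : ℕ, (T₂-T₁) * (Real.log N - phi a T₁ ((N:ℝ)+1))
        + ((T₂-T₁) * phi a T₁ 0 - (T₂-T₁) * (3/T₁)) ≤ (LN z₂ N).im - (LN z₁ N).im := by
      intro N
      rw [hSeq N]
      have hsum : ∑ k ∈ Finset.range (N+1),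
          (Real.arctan (T₂/(a+(k:ℝ))) - Real.arctan (T₁/(a+(k:ℝ))))
          ≤ (T₂-T₁) * (phi a T₁ ((N:ℝ)+1) - phi a T₁ 0 + 3/T₁) := by
        calc ∑ k ∈ Finset.range (N+1),
            (Real.arctan (T₂/(a+(k:ℝ))) - Real.arctan (T₁/(a+(k:ℝ))))
            ≤ ∑ k ∈ Finset.range (N+1), (T₂-T₁) * gg a T₁ (k:ℝ) := by
              apply Finset.sum_le_sum
              intro k _
              exact arctan_diff_le (a+(k:ℝ)) T₁ T₂ (hxk k) hT1pos.le h12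
          _ = (T₂-T₁) * ∑ k ∈ Finset.range (N+1), gg a T₁ (k:ℝ) := by rw [Finset.mul_sum]
          _ ≤ (T₂-T₁) * (phi a T₁ ((N:ℝ)+1) - phi a T₁ 0 + 3/T₁) := by
              apply mul_le_mul_of_nonneg_left _ hδ
              have := (abs_le.mp (sum_gg_bound a T₁ ha.le h1 N)).2
              linarith
      nlinarith [hδ]
    have htends : Tendsto (fun N : ℕ => (T₂-T₁) * (Real.log N - phi a T₁ ((N:ℝ)+1))
        + ((T₂-T₁) * phi a T₁ 0 - (T₂-T₁) * (3/T₁))) atTop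
        (𝓝 ((T₂-T₁) * phi a T₁ 0 - (T₂-T₁) * (3/T₁))) := by
      have h0 := (log_sub_phi_tendsto a T₁ hT1pos).const_mul (T₂-T₁)
      have := h0.add (tendsto_const_nhds (x := (T₂-T₁) * phi a T₁ 0 - (T₂-T₁) * (3/T₁)))
      simpa using this
    exact le_of_tendsto_of_tendsto htends hD (Filter.Eventually.of_forall hlow)
  · have hupp : ∀ N : ℕ, (LN z₂ N).im - (LN z₁ N).im
        ≤ (T₂-T₁) * (Real.log N - phi a T₂ ((N:ℝ)+1))
          + ((T₂-T₁) * phi a T₂ 0 + (T₂-T₁) * (3/T₂)) := by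
      intro N
      rw [hSeq N]
      have hsum : (T₂-T₁) * (phi a T₂ ((N:ℝ)+1) - phi a T₂ 0 - 3/T₂)
          ≤ ∑ k ∈ Finset.range (N+1),
            (Real.arctan (T₂/(a+(k:ℝ))) - Real.arctan (T₁/(a+(k:ℝ)))) := by
        calc (T₂-T₁) * (phi a T₂ ((N:ℝ)+1) - phi a T₂ 0 - 3/T₂)
            ≤ (T₂-T₁) * ∑ k ∈ Finset.range (N+1), gg a T₂ (k:ℝ) := by
              apply mul_le_mul_of_nonneg_left _ hδ
              have := (abs_le.mp (sum_gg_bound a T₂ ha.le (le_trans h1 h12) N)).1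
              linarith
          _ = ∑ k ∈ Finset.range (N+1), (T₂-T₁) * gg a T₂ (k:ℝ) := by rw [Finset.mul_sum]
          _ ≤ ∑ k ∈ Finset.range (N+1),
              (Real.arctan (T₂/(a+(k:ℝ))) - Real.arctan (T₁/(a+(k:ℝ)))) := by
              apply Finset.sum_le_sum
              intro k _
              exact arctan_diff_ge (a+(k:ℝ)) T₁ T₂ (hxk k) hT1pos.le h12
      nlinarith [hδ]
    have htends : Tendsto (fun N : ℕ => (T₂-T₁) * (Real.log N - phi a T₂ ((N:ℝ)+1))
        + ((T₂-T₁) * phi a T₂ 0 + (T₂-T₁) * (3/T₂))) atTop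
        (𝓝 ((T₂-T₁) * phi a T₂ 0 + (T₂-T₁) * (3/T₂))) := by
      have h0 := (log_sub_phi_tendsto a T₂ hT2pos).const_mul (T₂-T₁)
      have := h0.add (tendsto_const_nhds (x := (T₂-T₁) * phi a T₂ 0 + (T₂-T₁) * (3/T₂)))
      simpa using this
    exact le_of_tendsto_of_tendsto hD htends (Filter.Eventually.of_forall hupp)



lemma abs_log_le {x : ℝ} (h : |x - 1| ≤ 1/2) : |Real.log x| ≤ 2 * |x - 1| := by
  have hx1 : (1:ℝ)/2 ≤ x := by
    have := (abs_le.mp h).1; linarith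
  have hx0 : (0:ℝ) < x := by linarith
  have hinv : x⁻¹ ≤ 2 := by
    rw [inv_eq_one_div, div_le_iff₀ hx0]; linarith
  rw [abs_le]
  constructor
  · have hlog : Real.log (x⁻¹) ≤ x⁻¹ - 1 := Real.log_le_sub_one_of_pos (by positivity)
    rw [Real.log_inv] at hlog
    have h2 : x⁻¹ - 1 ≤ 2 * |x-1| := by
      rcases le_total x 1 with hx | hx
      · have he : x⁻¹ - 1 = x⁻¹ * (1-x) := by field_simp
        have habs : 1 - x ≤ |x-1| := by rw [abs_sub_comm]; exact le_abs_self _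
        have h3 : x⁻¹ * (1-x) ≤ 2 * (1-x) := mul_le_mul_of_nonneg_right hinv (by linarith)
        rw [he]
        nlinarith [abs_nonneg (x-1)]
      · have h3 : x⁻¹ ≤ 1 := by
          rw [inv_eq_one_div, div_le_one hx0]; linarith
        nlinarith [abs_nonneg (x-1)]
    linarith
  · have h4 := Real.log_le_sub_one_of_pos hx0
    have h5 := le_abs_self (x-1)
    linarith [abs_nonneg (x-1)]

lemma ratio_lemma (a β δ x M : ℝ) (hδ : 0 < δ) (hx : 1 ≤ x) (hβ : |β| ≤ M) :
    |(a^2 + (β + δ*x)^2)/(δ*x)^2 - 1| ≤ ((a^2+M^2)/δ^2 + 2*M/δ)/x := by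
  have hx0 : (0:ℝ) < x := lt_of_lt_of_le one_pos hx
  set y := δ*x with hy
  have hy0 : (0:ℝ) < y := by positivity
  have hM0 : 0 ≤ M := le_trans (abs_nonneg β) hβ
  have h1 : (a^2+(β+y)^2)/y^2 - 1 = (a^2 + β^2 + 2*β*y)/y^2 := by
    field_simp
    ring
  rw [h1, abs_div, abs_of_pos (by positivity : (0:ℝ) < y^2)]
  have hnum : |a^2 + β^2 + 2*β*y| ≤ a^2 + M^2 + 2*M*y := by
    have hb2 : β^2 ≤ M^2 := by nlinarith [_root_.sq_abs β, abs_nonneg β]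
    have hb3 : β*y ≤ M*y := mul_le_mul_of_nonneg_right (le_trans (le_abs_self β) hβ) hy0.le
    have hb4 : -(M*y) ≤ β*y := by
      have := mul_le_mul_of_nonneg_right (neg_abs_le β) hy0.le
      nlinarith [mul_le_mul_of_nonneg_right hβ hy0.le]
    rw [abs_le]
    constructor <;> nlinarith [sq_nonneg a]
  calc |a^2 + β^2 + 2*β*y| / y^2 ≤ (a^2 + M^2 + 2*M*y)/y^2 := by gcongr
    _ = (a^2+M^2)/y^2 + 2*M/y := by field_simp
    _ ≤ (a^2+M^2)/(δ^2*x) + 2*M/y := by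
        have hstep : (a^2+M^2)/y^2 ≤ (a^2+M^2)/(δ^2*x) := by
          apply div_le_div_of_nonneg_left (by positivity) (by positivity)
          rw [hy]; nlinarith
        linarith
    _ = ((a^2+M^2)/δ^2 + 2*M/δ)/x := by
        rw [hy]
        field_simp

lemma phi_log (a T w : ℝ) (hw : 0 < w) (h : 0 < a^2+T^2) :
    phi a T 0 - Real.log w = Real.log ((a^2+T^2)/w^2)/2 := by
  rw [phi, Real.log_div h.ne' (by positivity), Real.log_pow]
  push_cast
  ring_nf




set_option maxHeartbeats 1000000 in
theorem stmt_17 (u : ℂ) (hu : 0 < u.re) (v : ℝ) (hv : 0 < v) :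
    ∃ (E : ℕ → ℝ) (m : ℕ → ℤ),
      (∀ n : ℕ,
        Complex.arg (Complex.Gamma (u + 2 * Complex.I * v * (n + 1) / (π : ℂ)))
          - Complex.arg (Complex.Gamma (u + 2 * Complex.I * v * n / (π : ℂ)))
        = (2 * v / π) * Real.log (2 * v * n / π) + E n + 2 * π * (m n)) ∧
      E =O[atTop] (fun n : ℕ => 1 / (n : ℝ)) := by
  have hπ : (0:ℝ) < π := Real.pi_pos
  set a : ℝ := u.re with hadef
  set b : ℝ := u.im with hbdef
  set δ : ℝ := 2*v/π with hδdef
  have hδ : 0 < δ := by positivity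
  set zf : ℕ → ℂ := fun n => u + 2 * Complex.I * v * n / (π:ℂ) with hzf
  have hco : ∀ n : ℕ, (2 * Complex.I * (v:ℂ) * (n:ℂ) / (π:ℂ)) = Complex.ofReal (δ*n) * Complex.I := by
    intro n
    rw [hδdef]
    push_cast
    have : (π:ℂ) ≠ 0 := Complex.ofReal_ne_zero.mpr hπ.ne'
    field_simp
  have hre : ∀ n : ℕ, (zf n).re = a := by
    intro n
    rw [hzf]
    simp only [Complex.add_re, hco n, Complex.mul_re, Complex.ofReal_re, Complex.I_re,
      Complex.ofReal_im, Complex.I_im]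
    ring
  have him : ∀ n : ℕ, (zf n).im = b + δ*n := by
    intro n
    rw [hzf]
    simp only [Complex.add_im, hco n, Complex.mul_im, Complex.ofReal_re, Complex.I_im,
      Complex.ofReal_im, Complex.I_re]
    ring
  have hgam : ∀ n : ℕ, ∃ L : ℂ, Tendsto (LN (zf n)) atTop (𝓝 L)
      ∧ Complex.exp L = Complex.Gamma (zf n) := fun n =>
    exists_logGamma (zf n) (by rw [hre n]; exact hu)
  choose L hLt hLe using hgam
  have hargn : ∀ n : ℕ, ∃ k : ℤ, Complex.arg (Complex.Gamma (zf n)) = (L n).im + 2*π*k := by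
    intro n
    obtain ⟨k, hk⟩ := arg_exp_mod (L n)
    exact ⟨k, by rw [← hLe n]; exact hk⟩
  choose kk hkk using hargn
  refine ⟨fun n => (L (n+1)).im - (L n).im - (2*v/π)*Real.log (2*v*n/π),
    fun n => kk (n+1) - kk n, ?_, ?_⟩
  · intro n
    have h2 : (u + 2 * Complex.I * v * ((n:ℂ) + 1) / (π:ℂ)) = zf (n+1) := by
      rw [hzf]
      push_cast
      ring
    have h3 : (u + 2 * Complex.I * v * (n:ℂ) / (π:ℂ)) = zf n := rfl
    rw [h2, h3, hkk (n+1), hkk n]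
    push_cast
    ring
  · -- asymptotic bound
    set A : ℝ := a^2 + (|b|+δ)^2 with hA
    set M : ℝ := |b| + δ with hM
    set c₀ : ℝ := (a^2+M^2)/δ^2 + 2*M/δ with hc₀
    have hM0 : 0 ≤ M := by rw [hM]; positivity
    have hc₀0 : 0 ≤ c₀ := by rw [hc₀]; positivity
    rw [Asymptotics.isBigO_iff]
    refine ⟨δ*c₀ + 6, ?_⟩
    have hev : ∀ᶠ n : ℕ in atTop,
        max (max ((1-b)/δ) (-2*b/δ)) (max 1 (2*c₀)) ≤ (n:ℝ) :=
      tendsto_natCast_atTop_atTop.eventually_ge_atTop _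
    filter_upwards [hev] with n hn
    set x : ℝ := (n:ℝ) with hx
    have hx1 : (1:ℝ) ≤ x := le_trans (le_trans (le_max_left 1 (2*c₀)) (le_max_right _ _)) hn
    have hx0 : (0:ℝ) < x := lt_of_lt_of_le one_pos hx1
    have hc2 : 2*c₀ ≤ x := le_trans (le_trans (le_max_right 1 (2*c₀)) (le_max_right _ _)) hn
    have hT1ge1 : (1:ℝ) ≤ b + δ*x := by
      have h1 : (1-b)/δ ≤ x := le_trans (le_trans (le_max_left _ _) (le_max_left _ _)) hn
      have := (div_le_iff₀ hδ).mp h1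
      nlinarith
    have hT1half : δ*x/2 ≤ b + δ*x := by
      have h1 : -2*b/δ ≤ x := le_trans (le_trans (le_max_right _ _) (le_max_left _ _)) hn
      have := (div_le_iff₀ hδ).mp h1
      nlinarith
    set T₁ : ℝ := b + δ*x with hT₁def
    set T₂ : ℝ := b + δ*(x+1) with hT₂def
    have h12 : T₁ ≤ T₂ := by rw [hT₁def, hT₂def]; nlinarith
    have hT1pos : 0 < T₁ := lt_of_lt_of_le one_pos hT1ge1
    have hT2pos : 0 < T₂ := lt_of_lt_of_le hT1pos h12
    -- limit of the imaginary parts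
    set D : ℝ := (L (n+1)).im - (L n).im with hD
    have hDt : Tendsto (fun N : ℕ => (LN (zf (n+1)) N).im - (LN (zf n) N).im) atTop (𝓝 D) := by
      have h1 : Tendsto (fun N : ℕ => (LN (zf (n+1)) N).im) atTop (𝓝 ((L (n+1)).im)) :=
        (Complex.continuous_im.tendsto _).comp (hLt (n+1))
      have h2 : Tendsto (fun N : ℕ => (LN (zf n) N).im) atTop (𝓝 ((L n).im)) :=
        (Complex.continuous_im.tendsto _).comp (hLt n)
      exact h1.sub h2
    have hbounds := ImL_diff_bounds (zf n) (zf (n+1)) (by rw [hre n]; exact hu)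
      (by rw [hre n, hre (n+1)]) (T₁ := T₁) (T₂ := T₂)
      (by rw [him n])
      (by rw [him (n+1)]; push_cast; rw [hT₂def])
      hT1ge1 h12 D hDt
    rw [hre n] at hbounds
    have hTd : T₂ - T₁ = δ := by rw [hT₁def, hT₂def]; ring
    rw [hTd] at hbounds
    -- rewrite main term
    have hmain : (2*v/π) * Real.log (2*v*x/π) = δ * Real.log (δ*x) := by
      rw [hδdef]
      congr 2
      ring
    -- phi - log estimates
    have hq1 : (0:ℝ) < a^2 + T₁^2 := by positivity
    have hq2 : (0:ℝ) < a^2 + T₂^2 := by positivity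
    have hδx : (0:ℝ) < δ*x := by positivity
    have hr1 : |(a^2 + T₁^2)/(δ*x)^2 - 1| ≤ c₀/x := by
      rw [hT₁def]
      have := ratio_lemma a b δ x M hδ hx1 (by rw [hM]; linarith)
      rw [← hc₀] at this
      exact this
    have hr2 : |(a^2 + T₂^2)/(δ*x)^2 - 1| ≤ c₀/x := by
      have heq : T₂ = (b+δ) + δ*x := by rw [hT₂def]; ring
      rw [heq]
      have := ratio_lemma a (b+δ) δ x M hδ hx1
        (by rw [hM]; calc |b+δ| ≤ |b| + |δ| := abs_add_le _ _
                      _ = |b| + δ := by rw [abs_of_pos hδ])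
      rw [← hc₀] at this
      exact this
    have hhalf : c₀/x ≤ 1/2 := by
      rw [div_le_div_iff₀ hx0 (by norm_num)]
      linarith
    have hlog1 : |phi a T₁ 0 - Real.log (δ*x)| ≤ c₀/x := by
      rw [phi_log a T₁ (δ*x) hδx hq1]
      have := abs_log_le (le_trans hr1 hhalf)
      rw [abs_div]
      simp only [abs_of_pos (by norm_num : (0:ℝ) < 2)]
      calc |Real.log ((a^2+T₁^2)/(δ*x)^2)|/2 ≤ (2*|(a^2+T₁^2)/(δ*x)^2 - 1|)/2 := by linarith
        _ = |(a^2+T₁^2)/(δ*x)^2 - 1| := by ring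
        _ ≤ c₀/x := hr1
    have hlog2 : |phi a T₂ 0 - Real.log (δ*x)| ≤ c₀/x := by
      rw [phi_log a T₂ (δ*x) hδx hq2]
      have := abs_log_le (le_trans hr2 hhalf)
      rw [abs_div]
      simp only [abs_of_pos (by norm_num : (0:ℝ) < 2)]
      calc |Real.log ((a^2+T₂^2)/(δ*x)^2)|/2 ≤ (2*|(a^2+T₂^2)/(δ*x)^2 - 1|)/2 := by linarith
        _ = |(a^2+T₂^2)/(δ*x)^2 - 1| := by ring
        _ ≤ c₀/x := hr2
    -- 3/T bounds
    have h3T1 : δ*(3/T₁) ≤ 6/x := by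
      have h1 : δ*x/2 ≤ T₁ := hT1half
      have he : δ*(3/T₁) = (3*δ)/T₁ := by ring
      rw [he, div_le_div_iff₀ hT1pos hx0]
      nlinarith
    have h3T2 : δ*(3/T₂) ≤ 6/x := by
      have h1 : δ*x/2 ≤ T₂ := le_trans hT1half h12
      have he : δ*(3/T₂) = (3*δ)/T₂ := by ring
      rw [he, div_le_div_iff₀ hT2pos hx0]
      nlinarith
    -- combine
    have hup : D - δ*Real.log (δ*x) ≤ (δ*c₀+6)/x := by
      have h1 := hbounds.2
      have h2 := (abs_le.mp hlog2).2
      have h3 : δ*(phi a T₂ 0 - Real.log (δ*x)) ≤ δ*(c₀/x) := by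
        apply mul_le_mul_of_nonneg_left _ hδ.le
        linarith
      have h4 : δ*(c₀/x) = δ*c₀/x := by ring
      have h5 : (δ*c₀+6)/x = δ*c₀/x + 6/x := by ring
      have h6 : δ*(phi a T₂ 0 - Real.log (δ*x)) = δ*(phi a T₂ 0) - δ*Real.log (δ*x) := by ring
      linarith
    have hlo : -((δ*c₀+6)/x) ≤ D - δ*Real.log (δ*x) := by
      have h1 := hbounds.1
      have h2 := (abs_le.mp hlog1).1
      have h3 : -(δ*(c₀/x)) ≤ δ*(phi a T₁ 0 - Real.log (δ*x)) := by
        have h7 := mul_le_mul_of_nonneg_left ((abs_le.mp hlog1).1) hδ.le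
        have h8 : δ * -(c₀/x) = -(δ*(c₀/x)) := by ring
        linarith
      have h4 : δ*(c₀/x) = δ*c₀/x := by ring
      have h5 : (δ*c₀+6)/x = δ*c₀/x + 6/x := by ring
      have h6 : δ*(phi a T₁ 0 - Real.log (δ*x)) = δ*(phi a T₁ 0) - δ*Real.log (δ*x) := by ring
      linarith
    rw [Real.norm_eq_abs, Real.norm_eq_abs]
    have hE : (L (n+1)).im - (L n).im - (2*v/π)*Real.log (2*v*x/π) = D - δ*Real.log (δ*x) := by
      rw [hmain, hD]
    rw [hE]
    rw [abs_of_pos (by positivity : (0:ℝ) < 1/x)]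
    rw [abs_le]
    constructor
    · calc -((δ*c₀+6) * (1/x)) = -((δ*c₀+6)/x) := by ring
        _ ≤ D - δ*Real.log (δ*x) := hlo
    · calc D - δ*Real.log (δ*x) ≤ (δ*c₀+6)/x := hup
        _ = (δ*c₀+6) * (1/x) := by ring
end
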